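/- arXiv:0906.5416 — 4 statements merged into one kernel-verified Lean document; each statement's English description precedes it below -/
import Mathlib

section
/- Let U₁ and U₂ be unitary matrices on the same finite-dimensional complex Hilbert space such that α_max(U₁) + α_max(U₂) < π and α_min(U₁) + α_min(U₂) > −π. Then α_max(U₁U₂) ≤ α_max(U₁) + α_max(U₂) and α_min(U₁U₂) ≥ α_min(U₁) + α_min(U₂). -/
open Matrix
open scoped Matrix.Norms.L2Operator Kronecker ComplexOrder

noncomputable section
open Real Complex
open scoped ComplexOrder

/-- Maximum argument (taken in `(-π, π]`) of the eigenvalues of a matrix. -/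
noncomputable def argMaxSpec {n : ℕ} (U : Matrix (Fin n) (Fin n) ℂ) : ℝ :=
  sSup (Complex.arg '' spectrum ℂ U)

/-- Minimum argument (taken in `(-π, π]`) of the eigenvalues of a matrix. -/
noncomputable def argMinSpec {n : ℕ} (U : Matrix (Fin n) (Fin n) ℂ) : ℝ :=
  sInf (Complex.arg '' spectrum ℂ U)

/-- Length `α̃(U)` of the shortest arc of the unit circle containing all eigenvalues of `U`. -/
noncomputable def arcLength {n : ℕ} (U : Matrix (Fin n) (Fin n) ℂ) : ℝ :=
  sInf { L : ℝ | 0 ≤ L ∧ ∃ θ : ℝ, ∀ z ∈ spectrum ℂ U, ∃ φ : ℝ,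
    θ ≤ φ ∧ φ ≤ θ + L ∧ z = Complex.exp (φ * Complex.I) }

/-- The phase range `α(U) = min {π, α̃(U)}`. -/
noncomputable def phaseRange {n : ℕ} (U : Matrix (Fin n) (Fin n) ℂ) : ℝ :=
  min Real.pi (arcLength U)


/-- cos comparison on a wrap-around range. -/
lemma cosL {x y : ℝ} (hx0 : 0 ≤ x) (hxy : x < y) (hy : y < 2 * π - x) :
    Real.cos y < Real.cos x := by
  rcases le_or_gt y π with hyπ | hyπ
  · exact Real.cos_lt_cos_of_nonneg_of_le_pi hx0 hyπ hxy
  · have h1 : Real.cos (2 * π - y) < Real.cos x :=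
      Real.cos_lt_cos_of_nonneg_of_le_pi hx0 (by linarith) (by linarith)
    rwa [Real.cos_two_pi_sub] at h1

/-- Core angle lemma. -/
lemma lemC_core {M₁ M₂ : ℝ} (hM₂ : 0 ≤ M₂) (hle : M₂ ≤ M₁) (hsum : M₁ + M₂ < π)
    {a b : ℂ} (hab : ‖a‖ = ‖b‖) (ha1 : ‖a‖ ≤ 1)
    (hRa : Real.cos M₁ ≤ a.re) (hRb : Real.cos M₂ ≤ b.re) :
    Complex.arg (a * b) ≤ M₁ + M₂ := by
  have hM₁0 : 0 ≤ M₁ := hM₂.trans hle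
  rcases eq_or_ne a 0 with rfl | ha0
  · rw [zero_mul, Complex.arg_zero]; linarith
  rcases eq_or_ne b 0 with rfl | hb0
  · rw [mul_zero, Complex.arg_zero]; linarith
  obtain ⟨r, hra, hrb⟩ : ∃ r, ‖a‖ = r ∧ ‖b‖ = r := ⟨_, rfl, hab.symm⟩
  rw [hra] at ha1
  have hrpos : 0 < r := hra ▸ norm_pos_iff.mpr ha0
  by_contra hcon
  push_neg at hcon
  obtain ⟨α, hα⟩ : ∃ α, Complex.arg (a * b) = α := ⟨_, rfl⟩
  obtain ⟨β, hβ⟩ : ∃ β, Complex.arg b = β := ⟨_, rfl⟩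
  rw [hα] at hcon
  have hαπ : α ≤ π := hα ▸ Complex.arg_le_pi _
  -- cos β and bounds on β
  have hcosb : Real.cos β = b.re / r := by rw [← hβ, Complex.cos_arg hb0, hrb]
  have hcosβ : r * Real.cos β = b.re := by rw [hcosb]; field_simp
  have hM₂half : M₂ < π / 2 := by linarith
  have hcosM₂ : 0 < Real.cos M₂ :=
    Real.cos_pos_of_mem_Ioo ⟨by linarith [Real.pi_pos], hM₂half⟩
  have hbre : 0 < b.re := lt_of_lt_of_le hcosM₂ hRb
  have hcosβpos : 0 < Real.cos β := by rw [hcosb]; positivity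
  have hcosβ2 : Real.cos M₂ ≤ Real.cos β := by nlinarith
  have hβle : |β| ≤ M₂ := by
    by_contra hc
    push_neg at hc
    have := Real.cos_lt_cos_of_nonneg_of_le_pi hM₂ (hβ ▸ Complex.abs_arg_le_pi b) hc
    rw [Real.cos_abs] at this
    linarith
  obtain ⟨hβ1, hβ2⟩ := abs_le.mp hβle
  -- relation: r * cos (α - β) = a.re
  have habs : ‖(a * b)‖ = r * r := by rw [norm_mul, hra, hrb]
  have hab0 : a * b ≠ 0 := mul_ne_zero ha0 hb0
  have hnormb : b.re * b.re + b.im * b.im = r * r := by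
    have h := Complex.sq_norm b
    rw [hrb, Complex.normSq_apply, sq] at h
    linarith
  have hkey : r * Real.cos (α - β) = a.re := by
    rw [Real.cos_sub, ← hα, ← hβ, Complex.cos_arg hab0, Complex.sin_arg, Complex.sin_arg,
      Complex.cos_arg hb0, habs, hrb, Complex.mul_re, Complex.mul_im]
    field_simp
    linear_combination a.re * hnormb
  obtain ⟨δ, hδ⟩ : ∃ δ, α - β = δ := ⟨_, rfl⟩
  rw [hδ] at hkey
  have hδ1 : M₁ < δ := by linarith
  have hδ2 : δ ≤ π + M₂ := by linarith
  have hcosδlt : Real.cos δ < Real.cos M₁ := cosL hM₁0 hδ1 (by linarith)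
  have hRa' : Real.cos M₁ ≤ r * Real.cos δ := by rw [hkey]; exact hRa
  rcases le_or_gt 0 (Real.cos δ) with hδpos | hδneg
  · nlinarith
  · -- cos M₁ * cos β ≤ cos M₂ * cos δ
    have h1 : Real.cos M₁ * Real.cos β ≤ (r * Real.cos δ) * Real.cos β :=
      mul_le_mul_of_nonneg_right hRa' hcosβpos.le
    have h2 : (r * Real.cos β) * Real.cos δ ≤ Real.cos M₂ * Real.cos δ := by
      have h3 : Real.cos M₂ ≤ r * Real.cos β := by rw [hcosβ]; exact hRb
      exact mul_le_mul_of_nonpos_right h3 hδneg.le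
    have hineq : Real.cos M₁ * Real.cos β ≤ Real.cos M₂ * Real.cos δ := by nlinarith
    have hc1 : Real.cos (δ + M₂) < Real.cos (M₁ + β) :=
      cosL (by linarith) (by linarith) (by linarith)
    have hc2 : Real.cos (δ - M₂) < Real.cos (M₁ - β) :=
      cosL (by linarith) (by linarith) (by linarith)
    have e1 : Real.cos (δ + M₂) + Real.cos (δ - M₂) = 2 * (Real.cos M₂ * Real.cos δ) := by
      rw [Real.cos_add, Real.cos_sub]; ring
    have e2 : Real.cos (M₁ + β) + Real.cos (M₁ - β) = 2 * (Real.cos M₁ * Real.cos β) := by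
      rw [Real.cos_add, Real.cos_sub]; ring
    linarith

lemma lemC {M₁ M₂ : ℝ} (h₁ : 0 ≤ M₁) (h₂ : 0 ≤ M₂) (hsum : M₁ + M₂ < π)
    {a b : ℂ} (hab : ‖a‖ = ‖b‖) (ha1 : ‖a‖ ≤ 1)
    (hRa : Real.cos M₁ ≤ a.re) (hRb : Real.cos M₂ ≤ b.re) :
    Complex.arg (a * b) ≤ M₁ + M₂ := by
  rcases le_total M₂ M₁ with h | h
  · exact lemC_core h₂ h hsum hab ha1 hRa hRb
  · rw [mul_comm, add_comm]
    exact lemC_core h₁ h (by linarith) hab.symm (hab ▸ ha1) hRb hRa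

lemma lemCabs {M₁ M₂ : ℝ} (h₁ : 0 ≤ M₁) (h₂ : 0 ≤ M₂) (hsum : M₁ + M₂ < π)
    {a b : ℂ} (hab : ‖a‖ = ‖b‖) (ha1 : ‖a‖ ≤ 1)
    (hRa : Real.cos M₁ ≤ a.re) (hRb : Real.cos M₂ ≤ b.re) :
    |Complex.arg (a * b)| ≤ M₁ + M₂ := by
  have hup := lemC h₁ h₂ hsum hab ha1 hRa hRb
  have hconj : Complex.arg ((starRingEnd ℂ) a * (starRingEnd ℂ) b) ≤ M₁ + M₂ := by
    apply lemC h₁ h₂ hsum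
    · simpa using hab
    · simpa using ha1
    · simpa using hRa
    · simpa using hRb
  rw [← _root_.map_mul, Complex.arg_conj] at hconj
  have hne : Complex.arg (a * b) ≠ π := by
    intro hc
    rw [hc] at hup
    linarith
  rw [if_neg hne] at hconj
  exact abs_le.mpr ⟨by linarith, hup⟩

variable {n : ℕ}

lemma exists_eigvec {M : Matrix (Fin n) (Fin n) ℂ} {z : ℂ} (hz : z ∈ spectrum ℂ M) :
    ∃ y : Fin n → ℂ, y ≠ 0 ∧ M *ᵥ y = z • y := by
  rw [← AlgEquiv.spectrum_eq (Matrix.toLinAlgEquiv' (R := ℂ) (n := Fin n)) M] at hz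
  have h := Module.End.hasEigenvalue_iff_mem_spectrum.mpr hz
  obtain ⟨y, hy⟩ := h.exists_hasEigenvector
  exact ⟨y, hy.2, by simpa [Matrix.toLinAlgEquiv'_apply] using hy.apply_eq_smul⟩

lemma mem_spectrum_of_eigvec {M : Matrix (Fin n) (Fin n) ℂ} {z : ℂ} {y : Fin n → ℂ}
    (hy : y ≠ 0) (hMy : M *ᵥ y = z • y) : z ∈ spectrum ℂ M := by
  rw [← AlgEquiv.spectrum_eq (Matrix.toLinAlgEquiv' (R := ℂ) (n := Fin n)) M]
  rw [← Module.End.hasEigenvalue_iff_mem_spectrum]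
  exact Module.End.hasEigenvalue_of_hasEigenvector
    ⟨Module.End.mem_eigenspace_iff.mpr (by simpa [Matrix.toLinAlgEquiv'_apply] using hMy), hy⟩

lemma dot_self_ne_zero {y : Fin n → ℂ} (hy : y ≠ 0) : star y ⬝ᵥ y ≠ 0 :=
  fun hc => hy (dotProduct_star_self_eq_zero.mp hc)

lemma dot_conjTranspose (U : Matrix (Fin n) (Fin n) ℂ) (v : Fin n → ℂ) :
    star v ⬝ᵥ (Uᴴ *ᵥ v) = (starRingEnd ℂ) (star v ⬝ᵥ (U *ᵥ v)) := by
  simp only [dotProduct, Matrix.mulVec, Matrix.conjTranspose_apply, map_sum, _root_.map_mul,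
    star_sum, star_mul', Pi.star_apply, RingHom.coe_coe, starRingEnd_apply, star_star]
  simp only [Finset.mul_sum]
  rw [Finset.sum_comm]
  apply Finset.sum_congr rfl
  intros i _
  apply Finset.sum_congr rfl
  intros j _
  ring

lemma dot_unitary_self {U : Matrix (Fin n) (Fin n) ℂ} (hU : U ∈ Matrix.unitaryGroup (Fin n) ℂ)
    (y : Fin n → ℂ) : star (U *ᵥ y) ⬝ᵥ (U *ᵥ y) = star y ⬝ᵥ y := by
  rw [Matrix.star_mulVec, ← Matrix.dotProduct_mulVec, Matrix.mulVec_mulVec]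
  have h1 : Uᴴ * U = 1 := by
    have := hU.1
    rwa [Matrix.star_eq_conjTranspose] at this
  rw [h1, Matrix.one_mulVec]

lemma conj_mul_self_eq_one {U : Matrix (Fin n) (Fin n) ℂ}
    (hU : U ∈ Matrix.unitaryGroup (Fin n) ℂ) {z : ℂ} {y : Fin n → ℂ}
    (hy : y ≠ 0) (hUy : U *ᵥ y = z • y) : (starRingEnd ℂ) z * z = 1 := by
  have h := dot_unitary_self hU y
  rw [hUy] at h
  rw [star_smul, smul_dotProduct, dotProduct_smul] at h
  have hd := dot_self_ne_zero hy
  have : ((starRingEnd ℂ) z * z - 1) * (star y ⬝ᵥ y) = 0 := by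
    rw [sub_mul, one_mul]
    rw [smul_eq_mul, smul_eq_mul] at h
    rw [starRingEnd_apply]
    linear_combination h
  rcases mul_eq_zero.mp this with h' | h'
  · exact sub_eq_zero.mp h'
  · exact absurd h' hd

lemma abs_eq_one_of_eigvec {U : Matrix (Fin n) (Fin n) ℂ}
    (hU : U ∈ Matrix.unitaryGroup (Fin n) ℂ) {z : ℂ} {y : Fin n → ℂ}
    (hy : y ≠ 0) (hUy : U *ᵥ y = z • y) : ‖z‖ = 1 := by
  have h := conj_mul_self_eq_one hU hy hUy
  have h2 : Complex.normSq z = 1 := by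
    have := Complex.mul_conj z
    rw [mul_comm] at this
    rw [this] at h
    exact_mod_cast h
  have h3 : ‖z‖ ^ 2 = 1 := by rw [Complex.sq_norm]; exact h2
  nlinarith [norm_nonneg z]
lemma key {U : Matrix (Fin n) (Fin n) ℂ} (hU : U ∈ Matrix.unitaryGroup (Fin n) ℂ)
    {c h : ℝ}
    (hspec : ∀ z ∈ spectrum ℂ U, Real.cos h ≤ (Complex.exp ((-c : ℝ) * Complex.I) * z).re)
    (v : Fin n → ℂ) (hv : star v ⬝ᵥ v = 1) :
    Real.cos h ≤ (Complex.exp ((-c : ℝ) * Complex.I) * (star v ⬝ᵥ (U *ᵥ v))).re := by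
  classical
  set μ : ℂ := Complex.exp ((-c : ℝ) * Complex.I) with hμ
  set d : ℝ := 2 * Real.cos h with hd
  set A : Matrix (Fin n) (Fin n) ℂ :=
    μ • U + (starRingEnd ℂ) μ • Uᴴ - (d : ℂ) • 1 with hA
  obtain ⟨hU1', hU2'⟩ := Unitary.mem_iff.mp hU
  rw [Matrix.star_eq_conjTranspose] at hU1' hU2'
  have hAH : A.IsHermitian := by
    show Aᴴ = A
    rw [hA]
    simp only [Matrix.conjTranspose_sub, Matrix.conjTranspose_add, Matrix.conjTranspose_smul,
      Matrix.conjTranspose_one, Matrix.conjTranspose_conjTranspose, star_star,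
      starRingEnd_apply]
    have hsd : star ((d : ℝ) : ℂ) = ((d : ℝ) : ℂ) := by
      rw [← starRingEnd_apply, Complex.conj_ofReal]
    rw [hsd, add_comm (star μ • Uᴴ) (μ • U)]
  have hcomm : A * U = U * A := by
    rw [hA]
    rw [Matrix.sub_mul, Matrix.add_mul, Matrix.mul_sub, Matrix.mul_add]
    rw [Matrix.smul_mul, Matrix.smul_mul, Matrix.smul_mul, Matrix.mul_smul, Matrix.mul_smul,
      Matrix.mul_smul, Matrix.one_mul, Matrix.mul_one, hU1', hU2']
  have heig : ∀ i, 0 ≤ hAH.eigenvalues i := by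
    intro i
    set t : ℝ := hAH.eigenvalues i with ht
    set w : Fin n → ℂ := ⇑(hAH.eigenvectorBasis i) with hw
    have hw0 : w ≠ 0 := by
      have h1 := hAH.eigenvectorBasis.orthonormal.ne_zero i
      intro hc
      apply h1
      apply (EuclideanSpace.equiv (Fin n) ℂ).injective
      simpa [hw] using hc
    have hAw : A *ᵥ w = (t : ℂ) • w := by
      have h1 := hAH.mulVec_eigenvectorBasis i
      rw [← hw, ← ht] at h1
      rw [h1]
      funext j
      simp [Complex.real_smul]
    set E := Module.End.eigenspace (Matrix.toLinAlgEquiv' A :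
      Module.End ℂ (Fin n → ℂ)) ((t : ℝ) : ℂ) with hE
    have hwE : w ∈ E := Module.End.mem_eigenspace_iff.mpr
      (by simpa [Matrix.toLinAlgEquiv'_apply] using hAw)
    have hinv : ∀ x ∈ E, (Matrix.toLinAlgEquiv' U : Module.End ℂ (Fin n → ℂ)) x ∈ E := by
      intro x hx
      rw [hE, Module.End.mem_eigenspace_iff] at hx ⊢
      simp only [Matrix.toLinAlgEquiv'_apply] at hx ⊢
      rw [Matrix.mulVec_mulVec, hcomm, ← Matrix.mulVec_mulVec, hx, Matrix.mulVec_smul]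
    set g := LinearMap.restrict (Matrix.toLinAlgEquiv' U :
      Module.End ℂ (Fin n → ℂ)) hinv with hg
    haveI : Nontrivial E := Submodule.nontrivial_iff_ne_bot.mpr
      (E.ne_bot_iff.mpr ⟨w, hwE, hw0⟩)
    obtain ⟨z, hz⟩ := Module.End.exists_eigenvalue g
    obtain ⟨x, hx⟩ := hz.exists_hasEigenvector
    set y : Fin n → ℂ := (x : Fin n → ℂ) with hy
    have hy0 : y ≠ 0 := fun hc => hx.2 (ZeroMemClass.coe_eq_zero.mp hc)
    have hUy : U *ᵥ y = z • y := by
      have h1 := hx.apply_eq_smul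
      have h2 := congrArg (Subtype.val) h1
      rw [hg] at h2
      simpa [LinearMap.restrict_apply, Matrix.toLinAlgEquiv'_apply] using h2
    have hzs : z ∈ spectrum ℂ U := mem_spectrum_of_eigvec hy0 hUy
    have hcz : (starRingEnd ℂ) z * z = 1 := conj_mul_self_eq_one hU hy0 hUy
    have hAy : A *ᵥ y = ((t : ℝ) : ℂ) • y := by
      have hyE : (y : Fin n → ℂ) ∈ E := x.2
      rw [hE, Module.End.mem_eigenspace_iff] at hyE
      simpa [Matrix.toLinAlgEquiv'_apply] using hyE
    have hUHy : Uᴴ *ᵥ y = ((starRingEnd ℂ) z) • y := by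
      have h1 : Uᴴ *ᵥ (U *ᵥ y) = y := by
        rw [Matrix.mulVec_mulVec, hU1', Matrix.one_mulVec]
      rw [hUy, Matrix.mulVec_smul] at h1
      calc Uᴴ *ᵥ y = ((starRingEnd ℂ) z * z) • (Uᴴ *ᵥ y) := by rw [hcz, one_smul]
        _ = (starRingEnd ℂ) z • (z • (Uᴴ *ᵥ y)) := by rw [smul_smul]
        _ = (starRingEnd ℂ) z • y := by rw [h1]
    have hAy2 : A *ᵥ y = (μ * z + (starRingEnd ℂ) μ * (starRingEnd ℂ) z - (d : ℂ)) • y := by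
      rw [hA, Matrix.sub_mulVec, Matrix.add_mulVec, Matrix.smul_mulVec,
        Matrix.smul_mulVec, Matrix.smul_mulVec, Matrix.one_mulVec, hUy, hUHy]
      rw [smul_smul, smul_smul, sub_smul, add_smul]
    have hsc : ((t : ℝ) : ℂ) = μ * z + (starRingEnd ℂ) μ * (starRingEnd ℂ) z - (d : ℂ) := by
      have h0 : (((t : ℝ) : ℂ) - (μ * z + (starRingEnd ℂ) μ * (starRingEnd ℂ) z - (d : ℂ))) • y
          = 0 := by
        rw [sub_smul, ← hAy, ← hAy2, sub_self]
      rcases smul_eq_zero.mp h0 with h' | h'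
      · exact sub_eq_zero.mp h'
      · exact absurd h' hy0
    have hre := congrArg Complex.re hsc
    rw [← _root_.map_mul] at hre
    simp only [Complex.ofReal_re, Complex.sub_re, Complex.add_re, Complex.conj_re] at hre
    have hs := hspec z hzs
    linarith [hre, hs, hd]
  have hPSD := (Matrix.IsHermitian.posSemidef_iff_eigenvalues_nonneg hAH).mpr heig
  have hq := hPSD.dotProduct_mulVec_nonneg v
  have hexp : star v ⬝ᵥ (A *ᵥ v) =
      μ * (star v ⬝ᵥ (U *ᵥ v)) + (starRingEnd ℂ) (μ * (star v ⬝ᵥ (U *ᵥ v))) - (d : ℂ) := by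
    rw [hA, Matrix.sub_mulVec, Matrix.add_mulVec, Matrix.smul_mulVec,
      Matrix.smul_mulVec, Matrix.smul_mulVec, Matrix.one_mulVec]
    rw [dotProduct_sub, dotProduct_add, dotProduct_smul,
      dotProduct_smul, dotProduct_smul, hv, dot_conjTranspose, _root_.map_mul]
    simp [smul_eq_mul]
  rw [hexp] at hq
  rw [Complex.le_def] at hq
  obtain ⟨hq1, -⟩ := hq
  simp only [Complex.zero_re, Complex.sub_re, Complex.add_re, Complex.conj_re,
    Complex.ofReal_re] at hq1
  linarith [hq1, hd]

lemma exists_unit_eigvec {M : Matrix (Fin n) (Fin n) ℂ} {z : ℂ} (hz : z ∈ spectrum ℂ M) :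
    ∃ v : Fin n → ℂ, star v ⬝ᵥ v = 1 ∧ M *ᵥ v = z • v := by
  obtain ⟨y, hy0, hMy⟩ := exists_eigvec hz
  have hreal : star y ⬝ᵥ y = ((∑ i, Complex.normSq (y i) : ℝ) : ℂ) := by
    rw [Complex.ofReal_sum]
    simp [dotProduct, Complex.normSq_eq_conj_mul_self]
  have hpos : 0 < ∑ i, Complex.normSq (y i) := by
    obtain ⟨i, hi⟩ := Function.ne_iff.mp hy0
    exact Finset.sum_pos' (fun j _ => Complex.normSq_nonneg _)
      ⟨i, Finset.mem_univ i, Complex.normSq_pos.mpr hi⟩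
  set s := Real.sqrt (∑ i, Complex.normSq (y i)) with hs
  have hspos : 0 < s := Real.sqrt_pos.mpr hpos
  have hss : s * s = ∑ i, Complex.normSq (y i) := Real.mul_self_sqrt hpos.le
  refine ⟨((s⁻¹ : ℝ) : ℂ) • y, ?_, ?_⟩
  · rw [star_smul, smul_dotProduct, dotProduct_smul, hreal, smul_eq_mul,
      smul_eq_mul, Complex.star_def, Complex.conj_ofReal, ← Complex.ofReal_mul,
      ← Complex.ofReal_mul, ← hss]
    norm_cast
    have hsne : s ≠ 0 := hspos.ne'
    field_simp
  · rw [Matrix.mulVec_smul, hMy, smul_comm]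

lemma abs_dot_le {U : Matrix (Fin n) (Fin n) ℂ} (hU : U ∈ Matrix.unitaryGroup (Fin n) ℂ)
    {v : Fin n → ℂ} (hv : star v ⬝ᵥ v = 1) : ‖(star v ⬝ᵥ (U *ᵥ v))‖ ≤ 1 := by
  set x : EuclideanSpace ℂ (Fin n) := (WithLp.equiv 2 _).symm v with hx
  set y : EuclideanSpace ℂ (Fin n) := (WithLp.equiv 2 _).symm (U *ᵥ v) with hy
  have hxy : (inner ℂ x y : ℂ) = star v ⬝ᵥ (U *ᵥ v) := by
    rw [EuclideanSpace.inner_eq_star_dotProduct, dotProduct_comm]; rfl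
  have hxx : (inner ℂ x x : ℂ) = 1 := by
    rw [EuclideanSpace.inner_eq_star_dotProduct, dotProduct_comm]; exact hv
  have hyy : (inner ℂ y y : ℂ) = 1 := by
    rw [EuclideanSpace.inner_eq_star_dotProduct, dotProduct_comm]
    exact (dot_unitary_self hU v).trans hv
  have hnx : ‖x‖ = 1 := by
    have := inner_self_eq_norm_sq_to_K (𝕜 := ℂ) x
    rw [hxx] at this
    have h2 : ‖x‖ ^ 2 = (1 : ℝ) := Complex.ofReal_injective
      (by rw [Complex.ofReal_pow, Complex.ofReal_one]; exact this.symm)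
    nlinarith [norm_nonneg x]
  have hny : ‖y‖ = 1 := by
    have := inner_self_eq_norm_sq_to_K (𝕜 := ℂ) y
    rw [hyy] at this
    have h2 : ‖y‖ ^ 2 = (1 : ℝ) := Complex.ofReal_injective
      (by rw [Complex.ofReal_pow, Complex.ofReal_one]; exact this.symm)
    nlinarith [norm_nonneg y]
  have := norm_inner_le_norm (𝕜 := ℂ) x y
  rw [hxy, hnx, hny, mul_one] at this
  exact this

lemma spec_nonempty (hn : n ≠ 0) (M : Matrix (Fin n) (Fin n) ℂ) :
    (spectrum ℂ M).Nonempty := by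
  haveI : Nonempty (Fin n) := ⟨⟨0, Nat.pos_of_ne_zero hn⟩⟩
  obtain ⟨z, hz⟩ := Module.End.exists_eigenvalue
    (Matrix.toLinAlgEquiv' (R := ℂ) (n := Fin n) M : Module.End ℂ (Fin n → ℂ))
  refine ⟨z, ?_⟩
  rw [← AlgEquiv.spectrum_eq (Matrix.toLinAlgEquiv' (R := ℂ) (n := Fin n)) M]
  exact Module.End.hasEigenvalue_iff_mem_spectrum.mp hz

lemma spec_empty (M : Matrix (Fin 0) (Fin 0) ℂ) : spectrum ℂ M = ∅ := by
  haveI : Subsingleton (Matrix (Fin 0) (Fin 0) ℂ) := ⟨fun a b => by ext i; exact i.elim0⟩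
  ext z
  simp [spectrum.mem_iff, isUnit_of_subsingleton]

lemma re_rot_ge {U : Matrix (Fin n) (Fin n) ℂ} (hU : U ∈ Matrix.unitaryGroup (Fin n) ℂ)
    {z : ℂ} (hz : z ∈ spectrum ℂ U) {lo hi : ℝ}
    (h1 : lo ≤ Complex.arg z) (h2 : Complex.arg z ≤ hi) (hlo : -π < lo) (hhi : hi ≤ π) :
    Real.cos ((hi - lo) / 2) ≤ (Complex.exp ((-((hi + lo) / 2) : ℝ) * Complex.I) * z).re := by
  obtain ⟨y, hy0, hUy⟩ := exists_eigvec hz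
  have habs : ‖z‖ = 1 := abs_eq_one_of_eigvec hU hy0 hUy
  have hz1 : z = Complex.exp ((Complex.arg z : ℝ) * Complex.I) := by
    conv_lhs => rw [← Complex.norm_mul_exp_arg_mul_I z]
    rw [habs, Complex.ofReal_one, one_mul]
  rw [hz1, ← Complex.exp_add]
  have he : ((-((hi + lo) / 2) : ℝ) : ℂ) * Complex.I + ((Complex.arg z : ℝ) : ℂ) * Complex.I
      = ((Complex.arg z - (hi + lo) / 2 : ℝ) : ℂ) * Complex.I := by push_cast; ring
  rw [he, Complex.exp_ofReal_mul_I_re]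
  rw [← Real.cos_abs (Complex.arg z - (hi + lo) / 2)]
  apply Real.cos_le_cos_of_nonneg_of_le_pi (abs_nonneg _) (by linarith)
  rw [abs_le]
  constructor <;> linarith

/-- Subadditivity of `α_max` / superadditivity of `α_min` under products of unitaries. -/
theorem argMax_argMin_mul {n : ℕ} (U₁ U₂ : Matrix (Fin n) (Fin n) ℂ)
    (hU₁ : U₁ ∈ Matrix.unitaryGroup (Fin n) ℂ) (hU₂ : U₂ ∈ Matrix.unitaryGroup (Fin n) ℂ)
    (hmax : argMaxSpec U₁ + argMaxSpec U₂ < Real.pi)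
    (hmin : argMinSpec U₁ + argMinSpec U₂ > -Real.pi) :
    argMaxSpec (U₁ * U₂) ≤ argMaxSpec U₁ + argMaxSpec U₂ ∧
      argMinSpec (U₁ * U₂) ≥ argMinSpec U₁ + argMinSpec U₂ := by
  rcases Nat.eq_zero_or_pos n with hn | hn
  · subst hn
    constructor <;>
      simp [argMaxSpec, argMinSpec, spec_empty, Real.sSup_empty, Real.sInf_empty]
  · have hn' : n ≠ 0 := hn.ne'
    -- abbreviations
    have hprodU : U₁ * U₂ ∈ Matrix.unitaryGroup (Fin n) ℂ := mul_mem hU₁ hU₂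
    obtain ⟨hU11, -⟩ := Unitary.mem_iff.mp hU₁
    rw [Matrix.star_eq_conjTranspose] at hU11
    -- spectral arg facts
    have facts : ∀ M : Matrix (Fin n) (Fin n) ℂ,
        (Complex.arg '' spectrum ℂ M).Nonempty ∧
        BddAbove (Complex.arg '' spectrum ℂ M) ∧ BddBelow (Complex.arg '' spectrum ℂ M) ∧
        argMinSpec M ≤ argMaxSpec M ∧ -π < argMinSpec M ∧ argMaxSpec M ≤ π ∧
        ∀ z ∈ spectrum ℂ M, argMinSpec M ≤ Complex.arg z ∧ Complex.arg z ≤ argMaxSpec M := by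
      intro M
      have hne : (Complex.arg '' spectrum ℂ M).Nonempty := (spec_nonempty hn' M).image _
      have hA : BddAbove (Complex.arg '' spectrum ℂ M) := by
        refine ⟨π, ?_⟩
        rintro x ⟨z, hz, rfl⟩
        exact Complex.arg_le_pi z
      have hB : BddBelow (Complex.arg '' spectrum ℂ M) := by
        refine ⟨-π, ?_⟩
        rintro x ⟨z, hz, rfl⟩
        exact (Complex.neg_pi_lt_arg z).le
      have hmem : argMinSpec M ∈ Complex.arg '' spectrum ℂ M :=
        hne.csInf_mem ((Matrix.finite_spectrum M).image _)
      obtain ⟨z₀, -, hz₀⟩ := hmem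
      refine ⟨hne, hA, hB, csInf_le_csSup hne hB hA, ?_, ?_, fun z hz => ?_⟩
      · exact lt_of_lt_of_le (Complex.neg_pi_lt_arg z₀) (le_of_eq hz₀)
      · exact csSup_le hne (by rintro x ⟨z, hz, rfl⟩; exact Complex.arg_le_pi z)
      · exact ⟨csInf_le hB ⟨z, hz, rfl⟩, le_csSup hA ⟨z, hz, rfl⟩⟩
    obtain ⟨hne1, hA1, hB1, hle1, hlo1, hhi1, hb1⟩ := facts U₁
    obtain ⟨hne2, hA2, hB2, hle2, hlo2, hhi2, hb2⟩ := facts U₂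
    obtain ⟨hne12, hA12, hB12, -, -, -, -⟩ := facts (U₁ * U₂)
    set A₁ := argMaxSpec U₁
    set a₁ := argMinSpec U₁
    set A₂ := argMaxSpec U₂
    set a₂ := argMinSpec U₂
    set c₁ := (A₁ + a₁) / 2 with hc₁
    set c₂ := (A₂ + a₂) / 2 with hc₂
    set h₁ := (A₁ - a₁) / 2 with hh₁
    set h₂ := (A₂ - a₂) / 2 with hh₂
    have hh₁0 : 0 ≤ h₁ := by rw [hh₁]; linarith
    have hh₂0 : 0 ≤ h₂ := by rw [hh₂]; linarith
    have hHsum : h₁ + h₂ < π := by rw [hh₁, hh₂]; linarith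
    -- the per-eigenvalue bound
    have hmain : ∀ lam ∈ spectrum ℂ (U₁ * U₂),
        a₁ + a₂ ≤ Complex.arg lam ∧ Complex.arg lam ≤ A₁ + A₂ := by
      intro lam hlam
      obtain ⟨v, hv, hlamv⟩ := exists_unit_eigvec hlam
      have hv0 : v ≠ 0 := by
        intro hc
        rw [hc] at hv
        simp at hv
      have habslam : ‖lam‖ = 1 := abs_eq_one_of_eigvec hprodU hv0 hlamv
      have hlam0 : lam ≠ 0 := by
        intro hc
        rw [hc] at habslam
        simp at habslam
      set s₁ := star v ⬝ᵥ (U₁ *ᵥ v) with hs₁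
      set s₂ := star v ⬝ᵥ (U₂ *ᵥ v) with hs₂
      have hs₂eq : s₂ = lam * (starRingEnd ℂ) s₁ := by
        have h1 : U₁ᴴ *ᵥ ((U₁ * U₂) *ᵥ v) = U₂ *ᵥ v := by
          rw [Matrix.mulVec_mulVec, ← Matrix.mul_assoc, hU11, Matrix.one_mul]
        rw [hlamv, Matrix.mulVec_smul] at h1
        rw [hs₂, ← h1, dotProduct_smul, smul_eq_mul, dot_conjTranspose]
      set a : ℂ := Complex.exp ((-c₁ : ℝ) * Complex.I) * s₁ with ha
      set b : ℂ := Complex.exp ((-c₂ : ℝ) * Complex.I) * s₂ with hb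
      have hra : Real.cos h₁ ≤ a.re := by
        rw [ha, hh₁, hc₁]
        exact key hU₁ (fun z hz => re_rot_ge hU₁ hz (hb1 z hz).1 (hb1 z hz).2 hlo1 hhi1) v hv
      have hrb : Real.cos h₂ ≤ b.re := by
        rw [hb, hh₂, hc₂]
        exact key hU₂ (fun z hz => re_rot_ge hU₂ hz (hb2 z hz).1 (hb2 z hz).2 hlo2 hhi2) v hv
      have habsa : ‖a‖ = ‖s₁‖ := by
        rw [ha, norm_mul, Complex.norm_exp_ofReal_mul_I, one_mul]
      have habsb : ‖b‖ = ‖s₁‖ := by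
        rw [hb, norm_mul, Complex.norm_exp_ofReal_mul_I, one_mul, hs₂eq, norm_mul, habslam,
          one_mul, Complex.norm_conj]
      have hab : ‖a‖ = ‖b‖ := by rw [habsa, habsb]
      have ha1 : ‖a‖ ≤ 1 := by rw [habsa]; exact abs_dot_le hU₁ hv
      have hargab : |Complex.arg (a * b)| ≤ h₁ + h₂ :=
        lemCabs hh₁0 hh₂0 hHsum hab ha1 hra hrb
      -- s₁ ≠ 0
      have hs₁0 : s₁ ≠ 0 := by
        intro hc
        have ha0 : a = 0 := by rw [ha, hc, mul_zero]
        have hb0 : b = 0 := by rw [hb, hs₂eq, hc, _root_.map_zero, mul_zero, mul_zero]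
        rw [ha0] at hra
        rw [hb0] at hrb
        simp only [Complex.zero_re] at hra hrb
        have hc1 : π / 2 ≤ h₁ := by
          by_contra hcc
          push_neg at hcc
          have := Real.cos_pos_of_mem_Ioo (x := h₁) ⟨by linarith [Real.pi_pos], hcc⟩
          linarith
        have hc2 : π / 2 ≤ h₂ := by
          by_contra hcc
          push_neg at hcc
          have := Real.cos_pos_of_mem_Ioo (x := h₂) ⟨by linarith [Real.pi_pos], hcc⟩
          linarith
        linarith
      have hb0 : b ≠ 0 := by
        intro hc
        rw [hc, norm_zero] at habsb
        exact hs₁0 (by simpa using habsb.symm)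
      have ha0 : a ≠ 0 := by
        intro hc
        rw [hc, norm_zero] at habsa
        exact hs₁0 (by simpa using habsa.symm)
      have hab0 : a * b ≠ 0 := mul_ne_zero ha0 hb0
      -- lam in terms of a * b
      set ρ : ℝ := Complex.normSq s₁ with hρ
      have hρpos : 0 < ρ := Complex.normSq_pos.mpr hs₁0
      have hprod : a * b = (ρ : ℂ) * (Complex.exp ((-(c₁ + c₂) : ℝ) * Complex.I) * lam) := by
        rw [ha, hb, hs₂eq]
        have he : ((-c₁ : ℝ) : ℂ) * Complex.I + ((-c₂ : ℝ) : ℂ) * Complex.I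
            = ((-(c₁ + c₂) : ℝ) : ℂ) * Complex.I := by push_cast; ring
        have hsq : s₁ * (starRingEnd ℂ) s₁ = (ρ : ℂ) := by
          rw [hρ]
          exact Complex.mul_conj s₁
        calc Complex.exp ((-c₁ : ℝ) * Complex.I) * s₁ *
              (Complex.exp ((-c₂ : ℝ) * Complex.I) * (lam * (starRingEnd ℂ) s₁))
            = (Complex.exp ((-c₁ : ℝ) * Complex.I) * Complex.exp ((-c₂ : ℝ) * Complex.I)) *
              (s₁ * (starRingEnd ℂ) s₁) * lam := by ring
          _ = _ := by rw [← Complex.exp_add, he, hsq]; ring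
      have hlameq : lam = ((ρ⁻¹ : ℝ) : ℂ) * Complex.exp (((c₁ + c₂) : ℝ) * Complex.I) * (a * b) := by
        rw [hprod]
        have he2 : Complex.exp (((c₁ + c₂) : ℝ) * Complex.I) *
            Complex.exp ((-(c₁ + c₂) : ℝ) * Complex.I) = 1 := by
          rw [← Complex.exp_add]
          have hz0 : (((c₁ + c₂) : ℝ) : ℂ) * Complex.I + ((-(c₁ + c₂) : ℝ) : ℂ) * Complex.I
              = 0 := by push_cast; ring
          rw [hz0]
          exact Complex.exp_zero
        have hρ2 : ((ρ⁻¹ : ℝ) : ℂ) * ((ρ : ℝ) : ℂ) = 1 := by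
          rw [← Complex.ofReal_mul, inv_mul_cancel₀ hρpos.ne', Complex.ofReal_one]
        calc lam = (((ρ⁻¹ : ℝ) : ℂ) * ((ρ : ℝ) : ℂ)) *
              ((Complex.exp (((c₁ + c₂) : ℝ) * Complex.I) *
                Complex.exp ((-(c₁ + c₂) : ℝ) * Complex.I)) * lam) := by rw [hρ2, he2]; ring
          _ = _ := by ring
      -- compute arg lam
      have hargIoc : c₁ + c₂ + Complex.arg (a * b) ∈ Set.Ioc (-π) π := by
        obtain ⟨hg1, hg2⟩ := abs_le.mp hargab
        constructor
        · have : a₁ + a₂ ≤ c₁ + c₂ + Complex.arg (a * b) := by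
            rw [hc₁, hc₂]; rw [hh₁, hh₂] at hg1; linarith
          linarith
        · have : c₁ + c₂ + Complex.arg (a * b) ≤ A₁ + A₂ := by
            rw [hc₁, hc₂]; rw [hh₁, hh₂] at hg2; linarith
          linarith
      have hargfin : Complex.arg lam = c₁ + c₂ + Complex.arg (a * b) := by
        have habpos : 0 < ‖(a * b)‖ := by
          rw [norm_mul]
          have h6 : 0 < ‖a‖ := norm_pos_iff.mpr ha0
          have h7 : 0 < ‖b‖ := norm_pos_iff.mpr hb0
          positivity
        have hOK : 0 < ρ⁻¹ * ‖(a * b)‖ := by positivity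
        rw [hlameq]
        have h5 : ((ρ⁻¹ : ℝ) : ℂ) * Complex.exp (((c₁ + c₂) : ℝ) * Complex.I) * (a * b)
            = ((ρ⁻¹ * ‖(a * b)‖ : ℝ) : ℂ) *
              (Real.cos (c₁ + c₂ + Complex.arg (a * b)) +
               Real.sin (c₁ + c₂ + Complex.arg (a * b)) * Complex.I) := by
          conv_lhs => rw [← Complex.norm_mul_exp_arg_mul_I (a * b)]
          rw [Complex.ofReal_cos, Complex.ofReal_sin, ← Complex.exp_mul_I]
          have hsplit : ((c₁ + c₂ + Complex.arg (a * b) : ℝ) : ℂ) * Complex.I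
              = (((c₁ + c₂) : ℝ) : ℂ) * Complex.I + ((Complex.arg (a * b) : ℝ) : ℂ) * Complex.I := by
            push_cast; ring
          rw [hsplit, Complex.exp_add]
          push_cast
          ring
        rw [h5, Complex.ofReal_cos, Complex.ofReal_sin,
          Complex.arg_mul_cos_add_sin_mul_I hOK hargIoc]
      obtain ⟨hg1, hg2⟩ := abs_le.mp hargab
      rw [hargfin]
      constructor
      · rw [hc₁, hc₂]; rw [hh₁, hh₂] at hg1; linarith
      · rw [hc₁, hc₂]; rw [hh₁, hh₂] at hg2; linarith
    constructor
    · apply csSup_le hne12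
      rintro x ⟨lam, hlam, rfl⟩
      exact (hmain lam hlam).2
    · apply le_csInf hne12
      rintro x ⟨lam, hlam, rfl⟩
      exact (hmain lam hlam).1
end
end

section
/- For any unitary matrices U₁ and U₂ on the same finite-dimensional complex Hilbert space, α(U₁† U₂) ≤ α(U₁) + α(U₂), where U₁† denotes the conjugate transpose of U₁. -/
open Matrix
open scoped Matrix.Norms.L2Operator Kronecker ComplexOrder

noncomputable section


lemma im_exp_mul (r ψ x : ℝ) :
    ((Complex.exp (x * Complex.I)) * ((r : ℂ) * Complex.exp (ψ * Complex.I))).im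
      = r * Real.sin (ψ + x) := by
  have h : (Complex.exp ((x : ℂ) * Complex.I)) * ((r : ℂ) * Complex.exp ((ψ : ℂ) * Complex.I))
      = (r : ℂ) * Complex.exp (((ψ + x : ℝ) : ℂ) * Complex.I) := by
    rw [mul_comm (Complex.exp _) ((r:ℂ) * _), mul_assoc, ← Complex.exp_add]
    congr 2
    push_cast
    ring
  rw [h]
  simp only [Complex.mul_im, Complex.ofReal_re, Complex.ofReal_im, zero_mul, add_zero]
  rw [Complex.exp_ofReal_mul_I_im]

lemma sector_lemma (w : ℂ) (θ L : ℝ) (hL0 : 0 ≤ L) (hLπ : L < Real.pi)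
    (hre : 0 < (Complex.exp (-(θ + L / 2) * Complex.I) * w).re)
    (him1 : 0 ≤ (Complex.exp (-θ * Complex.I) * w).im)
    (him2 : (Complex.exp (-(θ + L) * Complex.I) * w).im ≤ 0) :
    ∃ r : ℝ, 0 < r ∧ ∃ φ : ℝ, θ ≤ φ ∧ φ ≤ θ + L ∧ w = r * Complex.exp (φ * Complex.I) := by
  set w' : ℂ := Complex.exp (-(θ + L / 2) * Complex.I) * w with hw'
  have hw'ne : w' ≠ 0 := fun h => by simp [h] at hre
  set a : ℝ := Complex.arg w' with ha
  set r : ℝ := ‖w'‖ with hr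
  have hrpos : 0 < r := norm_pos_iff.mpr hw'ne
  have hweq : w' = (r : ℂ) * Complex.exp (a * Complex.I) := (Complex.norm_mul_exp_arg_mul_I w').symm
  have haa : |a| < Real.pi / 2 := Complex.abs_arg_lt_pi_div_two_iff.mpr (Or.inl hre)
  have ha1 : -(Real.pi/2) < a := neg_lt_of_abs_lt haa
  have ha2 : a < Real.pi/2 := lt_of_abs_lt haa
  have e1 : Complex.exp (-θ * Complex.I) * w
      = Complex.exp ((L/2 : ℝ) * Complex.I) * w' := by
    rw [hw', ← mul_assoc, ← Complex.exp_add]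
    congr 2
    push_cast
    ring
  have e2 : Complex.exp (-(θ + L) * Complex.I) * w
      = Complex.exp ((-(L/2) : ℝ) * Complex.I) * w' := by
    rw [hw', ← mul_assoc, ← Complex.exp_add]
    congr 2
    push_cast
    ring
  rw [e1, hweq, im_exp_mul] at him1
  rw [e2, hweq, im_exp_mul] at him2
  have hs1 : 0 ≤ Real.sin (a + L/2) := by
    by_contra hcon
    push_neg at hcon
    nlinarith
  have hs2 : Real.sin (a + -(L/2)) ≤ 0 := by
    by_contra hcon
    push_neg at hcon
    nlinarith
  have ha3 : 0 ≤ a + L/2 := by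
    by_contra hcon
    push_neg at hcon
    have : Real.sin (a + L/2) < 0 := by
      apply Real.sin_neg_of_neg_of_neg_pi_lt hcon
      have := Real.pi_pos
      linarith
    linarith
  have ha4 : a ≤ L/2 := by
    by_contra hcon
    push_neg at hcon
    have : 0 < Real.sin (a + -(L/2)) := by
      apply Real.sin_pos_of_pos_of_lt_pi (by linarith)
      have := Real.pi_pos
      linarith
    linarith
  refine ⟨r, hrpos, (θ + L/2) + a, by linarith, by linarith, ?_⟩
  have hwrec : w = Complex.exp (((θ + L/2 : ℝ) : ℂ) * Complex.I) * w' := by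
    rw [hw', ← mul_assoc, ← Complex.exp_add]
    have : ((θ + L/2 : ℝ) : ℂ) * Complex.I + -(θ + L / 2) * Complex.I = 0 := by
      push_cast; ring
    rw [this, Complex.exp_zero, one_mul]
  rw [hwrec, hweq, ← mul_assoc, mul_comm (Complex.exp _) ((r:ℂ)), mul_assoc, ← Complex.exp_add]
  congr 2
  push_cast
  ring


instance mycstar {n : ℕ} : CStarAlgebra (Matrix (Fin n) (Fin n) ℂ) :=
  { (inferInstance : NormedRing _), (inferInstance : StarRing _), (inferInstance : CStarRing _),
    (inferInstance : NormedAlgebra ℂ _), (inferInstance : StarModule ℂ _),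
    (inferInstance : CompleteSpace _) with }

lemma quad_lemma {n : ℕ} (U : Matrix (Fin n) (Fin n) ℂ) (hU : U ∈ Matrix.unitaryGroup (Fin n) ℂ)
    (c : ℂ) (t : ℝ) (h : ∀ z ∈ spectrum ℂ U, t ≤ (c * z).re) (x : Fin n → ℂ) :
    t * (star x ⬝ᵥ x).re ≤ (c * (star x ⬝ᵥ U *ᵥ x)).re := by
  have hN : IsStarNormal U :=
    ⟨by rw [Commute, SemiconjBy, (Unitary.mem_iff.mp hU).1, (Unitary.mem_iff.mp hU).2]⟩
  set g : ℂ → ℂ := fun z => ((Real.sqrt (2 * ((c * z).re - t)) : ℝ) : ℂ) with hg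
  have hgc : Continuous g := by
    apply Complex.continuous_ofReal.comp
    apply Real.continuous_sqrt.comp
    fun_prop
  set B := cfc g U with hB
  set f : ℂ → ℂ := fun z => c * z + star (c * z) - ((2 * t : ℝ) : ℂ) with hf
  have key : c • U + (star c) • Uᴴ - ((2 * t : ℝ) : ℂ) • 1 = star B * B := by
    have h1 : star B * B = cfc (fun z => star (g z) * g z) U := by
      rw [cfc_mul _ _ U (by fun_prop) hgc.continuousOn, cfc_star]
    have h2 : cfc (fun z => star (g z) * g z) U = cfc f U := by
      apply cfc_congr
      intro z hz
      have hzz := h z hz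
      simp only [hg, hf]
      rw [Complex.star_def, Complex.conj_ofReal, ← Complex.ofReal_mul,
        Real.mul_self_sqrt (by linarith)]
      rw [Complex.add_conj]
      push_cast
      ring
    have e0 : cfc f U = cfc (fun z => c * z + star (c * z)) U - cfc (fun _ => ((2 * t : ℝ) : ℂ)) U :=
      cfc_sub (fun z => c * z + star (c * z)) (fun _ => ((2 * t : ℝ) : ℂ)) U (by fun_prop) (by fun_prop)
    have e1 : cfc (fun z => c * z + star (c * z)) U
        = cfc (fun z => c * z) U + cfc (fun z => star (c * z)) U :=
      cfc_add (a := U) (fun z => c * z) (fun z => star (c * z)) (by fun_prop) (by fun_prop)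
    have e2 : cfc (fun z : ℂ => c * z) U = c • U := cfc_const_mul_id c U
    have e3 : cfc (fun z : ℂ => star (c * z)) U = (star c) • Uᴴ := by
      rw [cfc_star (fun z : ℂ => c * z) U, e2, star_smul, Matrix.star_eq_conjTranspose]
    have e4 : cfc (fun _ : ℂ => ((2 * t : ℝ) : ℂ)) U = ((2 * t : ℝ) : ℂ) • 1 := by
      rw [cfc_const _ _, Algebra.algebraMap_eq_smul_one]
    rw [h1, h2, e0, e1, e2, e3, e4]
  set w : ℂ := star x ⬝ᵥ U *ᵥ x with hw
  have hherm : star x ⬝ᵥ Uᴴ *ᵥ x = star w := by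
    rw [hw, Matrix.star_dotProduct, Matrix.star_mulVec, Matrix.conjTranspose_conjTranspose,
      ← Matrix.dotProduct_mulVec]
  have lhs_eq : star x ⬝ᵥ ((c • U + (star c) • Uᴴ - ((2 * t : ℝ) : ℂ) • 1) *ᵥ x)
      = c * w + star c * star w - ((2 * t : ℝ) : ℂ) * (star x ⬝ᵥ x) := by
    rw [Matrix.sub_mulVec, Matrix.add_mulVec, Matrix.smul_mulVec, Matrix.smul_mulVec,
      Matrix.smul_mulVec, Matrix.one_mulVec, dotProduct_sub, dotProduct_add,
      dotProduct_smul, dotProduct_smul, dotProduct_smul, hherm]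
    simp [smul_eq_mul, hw]
  have rhs_eq : star x ⬝ᵥ ((star B * B) *ᵥ x) = star (B *ᵥ x) ⬝ᵥ (B *ᵥ x) := by
    rw [← Matrix.mulVec_mulVec, Matrix.dotProduct_mulVec, Matrix.star_eq_conjTranspose B,
      ← Matrix.star_mulVec]
  set y : Fin n → ℂ := B *ᵥ x with hy
  have hynn : 0 ≤ (star y ⬝ᵥ y).re := by
    have : star y ⬝ᵥ y = ((∑ i, Complex.normSq (y i) : ℝ) : ℂ) := by
      simp only [dotProduct, Pi.star_apply, Complex.star_def]
      push_cast
      congr 1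
      ext i
      rw [mul_comm, Complex.mul_conj]
    rw [this, Complex.ofReal_re]
    exact Finset.sum_nonneg fun i _ => Complex.normSq_nonneg _
  have hmain : 0 ≤ (c * w + star c * star w - ((2 * t : ℝ) : ℂ) * (star x ⬝ᵥ x)).re := by
    rw [← lhs_eq, key, rhs_eq]
    exact hynn
  have hstar : (star c * star w).re = (c * w).re := by
    rw [← star_mul']
    exact Complex.conj_re _
  rw [Complex.sub_re, Complex.add_re, hstar] at hmain
  have : (((2 * t : ℝ) : ℂ) * (star x ⬝ᵥ x)).re = 2 * t * (star x ⬝ᵥ x).re := by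
    rw [Complex.re_ofReal_mul]
  rw [this] at hmain
  linarith

lemma exp_tilt (s u : ℝ) : Complex.exp ((s : ℂ) * Complex.I) * Complex.exp ((u : ℂ) * Complex.I)
    = Complex.exp (((s + u : ℝ) : ℂ) * Complex.I) := by
  rw [← Complex.exp_add]; congr 1; push_cast; ring

lemma numrange_lemma {n : ℕ} (U : Matrix (Fin n) (Fin n) ℂ)
    (hU : U ∈ Matrix.unitaryGroup (Fin n) ℂ) (θ L : ℝ) (hL0 : 0 ≤ L) (hLπ : L < Real.pi)
    (hspec : ∀ z ∈ spectrum ℂ U, ∃ φ : ℝ, θ ≤ φ ∧ φ ≤ θ + L ∧ z = Complex.exp (φ * Complex.I))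
    (x : Fin n → ℂ) (hx : x ≠ 0) :
    ∃ r : ℝ, 0 < r ∧ ∃ φ : ℝ, θ ≤ φ ∧ φ ≤ θ + L ∧
      star x ⬝ᵥ U *ᵥ x = r * Complex.exp (φ * Complex.I) := by
  have hπ := Real.pi_pos
  set w : ℂ := star x ⬝ᵥ U *ᵥ x with hw
  have hxx : 0 < (star x ⬝ᵥ x).re := by
    have heq : star x ⬝ᵥ x = ((∑ i, Complex.normSq (x i) : ℝ) : ℂ) := by
      simp only [dotProduct, Pi.star_apply, Complex.star_def]
      push_cast
      congr 1
      ext i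
      rw [mul_comm, Complex.mul_conj]
    rw [heq, Complex.ofReal_re]
    obtain ⟨i, hi⟩ := Function.ne_iff.mp hx
    exact Finset.sum_pos' (fun j _ => Complex.normSq_nonneg _)
      ⟨i, Finset.mem_univ i, Complex.normSq_pos.mpr hi⟩
  apply sector_lemma w θ L hL0 hLπ
  · -- real part positivity
    have key1 : ∀ z ∈ spectrum ℂ U,
        Real.cos (L/2) ≤ (Complex.exp (-(θ + L / 2) * Complex.I) * z).re := by
      intro z hz
      obtain ⟨φ, h1, h2, rfl⟩ := hspec z hz
      have he : Complex.exp (-(θ + L / 2) * Complex.I) * Complex.exp (φ * Complex.I)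
          = Complex.exp (((φ - (θ + L/2) : ℝ) : ℂ) * Complex.I) := by
        rw [← Complex.exp_add]; congr 1; push_cast; ring
      rw [he, Complex.exp_ofReal_mul_I_re]
      have habs : |φ - (θ + L/2)| ≤ L/2 := abs_le.mpr ⟨by linarith, by linarith⟩
      calc Real.cos (L/2) ≤ Real.cos |φ - (θ + L/2)| :=
            Real.cos_le_cos_of_nonneg_of_le_pi (abs_nonneg _) (by linarith) habs
        _ = Real.cos (φ - (θ + L/2)) := Real.cos_abs _
    have h1 := quad_lemma U hU (Complex.exp (-(θ + L / 2) * Complex.I)) (Real.cos (L/2)) key1 x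
    have hcos : 0 < Real.cos (L/2) := Real.cos_pos_of_mem_Ioo ⟨by linarith, by linarith⟩
    calc (0:ℝ) < Real.cos (L/2) * (star x ⬝ᵥ x).re := mul_pos hcos hxx
      _ ≤ _ := h1
  · -- im ≥ 0 at θ
    have key2 : ∀ z ∈ spectrum ℂ U,
        (0:ℝ) ≤ ((-Complex.I * Complex.exp (-θ * Complex.I)) * z).re := by
      intro z hz
      obtain ⟨φ, h1, h2, rfl⟩ := hspec z hz
      have he : (-Complex.I * Complex.exp (-θ * Complex.I)) * Complex.exp (φ * Complex.I)
          = -Complex.I * Complex.exp (((φ - θ : ℝ) : ℂ) * Complex.I) := by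
        rw [mul_assoc, ← Complex.exp_add]
        congr 2
        push_cast; ring
      rw [he]
      have hIv : ∀ v : ℂ, (-Complex.I * v).re = v.im := fun v => by simp
      rw [hIv, Complex.exp_ofReal_mul_I_im]
      exact Real.sin_nonneg_of_nonneg_of_le_pi (by linarith) (by linarith)
    have h2 := quad_lemma U hU (-Complex.I * Complex.exp (-θ * Complex.I)) 0 key2 x
    have : ((-Complex.I * Complex.exp (-θ * Complex.I)) * w).re
        = (Complex.exp (-θ * Complex.I) * w).im := by
      rw [mul_assoc]
      simp [Complex.mul_re]
    rw [this] at h2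
    simp only [zero_mul] at h2
    linarith
  · -- im ≤ 0 at θ + L
    have key3 : ∀ z ∈ spectrum ℂ U,
        (0:ℝ) ≤ ((Complex.I * Complex.exp (-(θ + L) * Complex.I)) * z).re := by
      intro z hz
      obtain ⟨φ, h1, h2, rfl⟩ := hspec z hz
      have he : (Complex.I * Complex.exp (-(θ + L) * Complex.I)) * Complex.exp (φ * Complex.I)
          = Complex.I * Complex.exp (((φ - (θ + L) : ℝ) : ℂ) * Complex.I) := by
        rw [mul_assoc, ← Complex.exp_add]
        congr 2
        push_cast; ring
      rw [he]
      have hIv : ∀ v : ℂ, (Complex.I * v).re = -v.im := fun v => by simp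
      rw [hIv, Complex.exp_ofReal_mul_I_im, ← Real.sin_neg]
      exact Real.sin_nonneg_of_nonneg_of_le_pi (by linarith) (by linarith)
    have h3 := quad_lemma U hU (Complex.I * Complex.exp (-(θ + L) * Complex.I)) 0 key3 x
    have : ((Complex.I * Complex.exp (-(θ + L) * Complex.I)) * w).re
        = -(Complex.exp (-(θ + L) * Complex.I) * w).im := by
      rw [mul_assoc]
      simp [Complex.mul_re]
    rw [this] at h3
    simp only [zero_mul] at h3
    linarith

lemma eigvec_lemma {n : ℕ} (M : Matrix (Fin n) (Fin n) ℂ) {z : ℂ} (hz : z ∈ spectrum ℂ M) :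
    ∃ x : Fin n → ℂ, x ≠ 0 ∧ M *ᵥ x = z • x := by
  rw [← AlgEquiv.spectrum_eq (Matrix.toLinAlgEquiv' (R := ℂ) (n := Fin n)) M] at hz
  have hz' : Module.End.HasEigenvalue (Matrix.toLinAlgEquiv' M) z :=
    Module.End.hasEigenvalue_iff_mem_spectrum.mpr hz
  obtain ⟨v, hv⟩ := hz'.exists_hasEigenvector
  refine ⟨v, hv.2, ?_⟩
  have h2 := hv.apply_eq_smul
  rw [Matrix.toLinAlgEquiv'_apply] at h2
  exact h2

def arcSet {n : ℕ} (U : Matrix (Fin n) (Fin n) ℂ) : Set ℝ :=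
  { L : ℝ | 0 ≤ L ∧ ∃ θ : ℝ, ∀ z ∈ spectrum ℂ U, ∃ φ : ℝ,
    θ ≤ φ ∧ φ ≤ θ + L ∧ z = Complex.exp (φ * Complex.I) }

lemma arcLength_eq {n : ℕ} (U : Matrix (Fin n) (Fin n) ℂ) : arcLength U = sInf (arcSet U) := rfl

lemma arcSet_bddBelow {n : ℕ} (U : Matrix (Fin n) (Fin n) ℂ) : BddBelow (arcSet U) :=
  ⟨0, fun _ hL => hL.1⟩

lemma arcLength_nonneg {n : ℕ} (U : Matrix (Fin n) (Fin n) ℂ) : 0 ≤ arcLength U :=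
  Real.sInf_nonneg fun _ hL => hL.1

lemma spectrum_abs_one {n : ℕ} {U : Matrix (Fin n) (Fin n) ℂ}
    (hU : U ∈ Matrix.unitaryGroup (Fin n) ℂ) {z : ℂ} (hz : z ∈ spectrum ℂ U) :
    ‖z‖ = 1 := by
  have := spectrum.subset_circle_of_unitary hU hz
  simpa using this

lemma arcSet_nonempty {n : ℕ} {U : Matrix (Fin n) (Fin n) ℂ}
    (hU : U ∈ Matrix.unitaryGroup (Fin n) ℂ) : (arcSet U).Nonempty := by
  refine ⟨2 * Real.pi, by positivity, -Real.pi, fun z hz => ?_⟩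
  refine ⟨Complex.arg z, (Complex.neg_pi_lt_arg z).le, by linarith [Complex.arg_le_pi z], ?_⟩
  have habs := spectrum_abs_one hU hz
  have := Complex.norm_mul_exp_arg_mul_I z
  rw [habs] at this
  simpa using this.symm

lemma phaseRange_nonneg {n : ℕ} (U : Matrix (Fin n) (Fin n) ℂ) : 0 ≤ phaseRange U :=
  le_min Real.pi_pos.le (arcLength_nonneg U)

/-- `α(U₁† U₂) ≤ α(U₁) + α(U₂)` for unitaries `U₁, U₂`. -/
theorem phaseRange_conjTranspose_mul_le {n : ℕ} (U₁ U₂ : Matrix (Fin n) (Fin n) ℂ)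
    (hU₁ : U₁ ∈ Matrix.unitaryGroup (Fin n) ℂ) (hU₂ : U₂ ∈ Matrix.unitaryGroup (Fin n) ℂ) :
    phaseRange (U₁ᴴ * U₂) ≤ phaseRange U₁ + phaseRange U₂ := by
  have hπ := Real.pi_pos
  have hUU : U₁ᴴ * U₂ ∈ Matrix.unitaryGroup (Fin n) ℂ := by
    rw [← Matrix.star_eq_conjTranspose]
    exact mul_mem (Unitary.star_mem hU₁) hU₂
  rcases le_or_gt Real.pi (arcLength U₁) with h₁ | h₁
  · have e1 : phaseRange U₁ = Real.pi := min_eq_left h₁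
    have : phaseRange (U₁ᴴ * U₂) ≤ Real.pi := min_le_left _ _
    linarith [phaseRange_nonneg U₂]
  rcases le_or_gt Real.pi (arcLength U₂) with h₂ | h₂
  · have e2 : phaseRange U₂ = Real.pi := min_eq_left h₂
    have : phaseRange (U₁ᴴ * U₂) ≤ Real.pi := min_le_left _ _
    linarith [phaseRange_nonneg U₁]
  have e1 : phaseRange U₁ = arcLength U₁ := min_eq_right h₁.le
  have e2 : phaseRange U₂ = arcLength U₂ := min_eq_right h₂.le
  rw [e1, e2]
  have main : arcLength (U₁ᴴ * U₂) ≤ arcLength U₁ + arcLength U₂ := by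
    apply le_of_forall_pos_le_add
    intro ε hε
    set δ : ℝ := min (ε/2) (min ((Real.pi - arcLength U₁)/2) ((Real.pi - arcLength U₂)/2))
      with hδdef
    have hδpos : 0 < δ := lt_min (by linarith) (lt_min (by linarith) (by linarith))
    have hδ1 : δ ≤ (Real.pi - arcLength U₁)/2 := (min_le_right _ _).trans (min_le_left _ _)
    have hδ2 : δ ≤ (Real.pi - arcLength U₂)/2 := (min_le_right _ _).trans (min_le_right _ _)
    have hδε : δ ≤ ε/2 := min_le_left _ _
    obtain ⟨L₁, hL₁mem, hL₁lt⟩ := exists_lt_of_csInf_lt (arcSet_nonempty hU₁)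
      (show sInf (arcSet U₁) < arcLength U₁ + δ by rw [← arcLength_eq]; linarith)
    obtain ⟨L₂, hL₂mem, hL₂lt⟩ := exists_lt_of_csInf_lt (arcSet_nonempty hU₂)
      (show sInf (arcSet U₂) < arcLength U₂ + δ by rw [← arcLength_eq]; linarith)
    obtain ⟨hL₁0, θ₁, harc₁⟩ := hL₁mem
    obtain ⟨hL₂0, θ₂, harc₂⟩ := hL₂mem
    have hL₁π : L₁ < Real.pi := by linarith
    have hL₂π : L₂ < Real.pi := by linarith
    have hmem : (L₁ + L₂) ∈ arcSet (U₁ᴴ * U₂) := by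
      refine ⟨by linarith, θ₂ - (θ₁ + L₁), fun z hz => ?_⟩
      obtain ⟨x, hx0, hxe⟩ := eigvec_lemma _ hz
      have hU2x : U₂ *ᵥ x = z • (U₁ *ᵥ x) := by
        have h5 : U₁ *ᵥ ((U₁ᴴ * U₂) *ᵥ x) = U₂ *ᵥ x := by
          rw [Matrix.mulVec_mulVec, ← Matrix.mul_assoc, ← Matrix.star_eq_conjTranspose,
            (Matrix.mem_unitaryGroup_iff.mp hU₁ : U₁ * star U₁ = 1), Matrix.one_mul]
        rw [← h5, hxe, Matrix.mulVec_smul]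
      obtain ⟨r₁, hr₁, φ₁, hφ₁a, hφ₁b, hw₁⟩ := numrange_lemma U₁ hU₁ θ₁ L₁ hL₁0 hL₁π harc₁ x hx0
      obtain ⟨r₂, hr₂, φ₂, hφ₂a, hφ₂b, hw₂⟩ := numrange_lemma U₂ hU₂ θ₂ L₂ hL₂0 hL₂π harc₂ x hx0
      have hrel : star x ⬝ᵥ U₂ *ᵥ x = z * (star x ⬝ᵥ U₁ *ᵥ x) := by
        rw [hU2x, dotProduct_smul, smul_eq_mul]
      rw [hw₁, hw₂] at hrel
      have habsz : ‖z‖ = 1 := spectrum_abs_one hUU hz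
      have hr12 : r₂ = r₁ := by
        have := congrArg norm hrel
        simpa [_root_.map_mul, Complex.norm_exp_ofReal_mul_I, Complex.norm_real, habsz,
          abs_of_pos hr₁, abs_of_pos hr₂] using this
      refine ⟨φ₂ - φ₁, by linarith, by linarith, ?_⟩
      have h0 : ((r₁ : ℂ)) ≠ 0 := by
        exact_mod_cast hr₁.ne'
      have hexp : Complex.exp ((φ₁ : ℂ) * Complex.I) ≠ 0 := Complex.exp_ne_zero _
      have hkey : z * ((r₁:ℂ) * Complex.exp ((φ₁ : ℂ) * Complex.I))
          = Complex.exp (((φ₂ - φ₁ : ℝ) : ℂ) * Complex.I)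
            * ((r₁:ℂ) * Complex.exp ((φ₁ : ℂ) * Complex.I)) := by
        rw [← hrel, hr12, ← mul_assoc, mul_comm (Complex.exp _) ((r₁:ℂ)), mul_assoc,
          ← Complex.exp_add]
        congr 2
        push_cast
        ring
      exact mul_right_cancel₀ (mul_ne_zero h0 hexp) hkey
    have := csInf_le (arcSet_bddBelow (U₁ᴴ * U₂)) hmem
    rw [← arcLength_eq] at this
    linarith
  exact le_trans (min_le_right _ _) main
end
end

section
/- For any unitary matrix U on a finite-dimensional complex Hilbert space, min over real φ of ‖U − e^{iφ} I‖ ≥ 2 sin(α(U)/4), where I is the identity matrix. -/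
open Matrix
open scoped Matrix.Norms.L2Operator Kronecker ComplexOrder
open scoped Pointwise

noncomputable section

lemma abs_exp_mul_I_sub_one' (t : ℝ) :
    ‖Complex.exp (t * Complex.I) - 1‖ = 2 * |Real.sin (t / 2)| := by
  have h1 : Complex.exp ((t:ℂ) * Complex.I) - 1
      = Complex.ofReal (Real.cos t - 1) + Complex.ofReal (Real.sin t) * Complex.I := by
    rw [Complex.exp_mul_I]
    push_cast
    ring
  rw [h1, Complex.norm_def, Complex.normSq_add_mul_I, Real.abs_sin_half]
  rw [show (Real.cos t - 1) ^ 2 + Real.sin t ^ 2 = 4 * ((1 - Real.cos t)/2) by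
    nlinarith [Real.sin_sq_add_cos_sq t]]
  rw [Real.sqrt_mul (by norm_num : (0:ℝ) ≤ 4)]
  rw [show (4:ℝ) = 2^2 by norm_num, Real.sqrt_sq (by norm_num : (0:ℝ) ≤ 2)]

/-- `min_φ ‖U - e^{iφ} I‖ ≥ 2 sin(α(U)/4)` for a unitary `U`. -/
theorem two_sin_le_norm_sub_phase {n : ℕ} (U : Matrix (Fin n) (Fin n) ℂ)
    (hU : U ∈ Matrix.unitaryGroup (Fin n) ℂ) (φ : ℝ) :
    2 * Real.sin (phaseRange U / 4) ≤
      ‖U - Complex.exp (φ * Complex.I) • (1 : Matrix (Fin n) (Fin n) ℂ)‖ := by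
  set α := phaseRange U with hαdef
  have hbdd : BddBelow { L : ℝ | 0 ≤ L ∧ ∃ θ : ℝ, ∀ z ∈ spectrum ℂ U, ∃ ψ : ℝ,
      θ ≤ ψ ∧ ψ ≤ θ + L ∧ z = Complex.exp (ψ * Complex.I) } :=
    ⟨0, fun L hL => hL.1⟩
  have harc0 : 0 ≤ arcLength U := Real.sInf_nonneg fun L hL => hL.1
  have hα0 : 0 ≤ α := le_min Real.pi_pos.le harc0
  have hαπ : α ≤ Real.pi := min_le_left _ _
  have hαarc : α ≤ arcLength U := min_le_right _ _
  set c : ℂ := Complex.exp (φ * Complex.I) with hc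
  have habs_c : ‖c‖ = 1 := Complex.norm_exp_ofReal_mul_I φ
  -- the rotated argument function
  set f : ℂ → ℝ := fun z => Complex.arg (z * Complex.exp (-(φ:ℂ) * Complex.I)) with hf
  -- key decomposition: for z on the unit circle, z = exp((φ + f z) I)
  have hcircle : ∀ z ∈ spectrum ℂ U, ‖z‖ = 1 := by
    intro z hz
    have hn : Nonempty (Fin n) := by
      by_contra h
      have : Subsingleton (Matrix (Fin n) (Fin n) ℂ) :=
        ⟨fun A B => by ext i; exact absurd ⟨i⟩ h⟩
      exact (spectrum.mem_iff.mp hz) (isUnit_of_subsingleton _)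
    have := spectrum.subset_circle_of_unitary hU hz
    simpa using mem_sphere_zero_iff_norm.mp this
  have hrep : ∀ z ∈ spectrum ℂ U, z = Complex.exp (((φ + f z : ℝ)) * Complex.I) := by
    intro z hz
    have habsw : ‖z * Complex.exp (-(φ:ℂ) * Complex.I)‖ = 1 := by
      rw [norm_mul, hcircle z hz, one_mul]
      simpa using Complex.norm_exp_ofReal_mul_I (-φ)
    have hw : Complex.exp ((f z : ℝ) * Complex.I) = z * Complex.exp (-(φ:ℂ) * Complex.I) := by
      have := Complex.norm_mul_exp_arg_mul_I (z * Complex.exp (-(φ:ℂ) * Complex.I))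
      rwa [habsw, Complex.ofReal_one, one_mul] at this
    have hcancel : Complex.exp ((φ:ℂ) * Complex.I) * (z * Complex.exp (-(φ:ℂ) * Complex.I)) = z := by
      rw [mul_comm z, ← mul_assoc, ← Complex.exp_add]
      simp
    rw [Complex.ofReal_add, add_mul, Complex.exp_add, hw, hcancel]
  by_cases hcase : ∃ z ∈ spectrum ℂ U, α / 2 ≤ |f z|
  · -- Case A: some eigenvalue far from e^{iφ}
    obtain ⟨z, hz, hfar⟩ := hcase
    have hn : Nonempty (Fin n) := by
      by_contra h
      have : Subsingleton (Matrix (Fin n) (Fin n) ℂ) :=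
        ⟨fun A B => by ext i; exact absurd ⟨i⟩ h⟩
      exact (spectrum.mem_iff.mp hz) (isUnit_of_subsingleton _)
    haveI := hn
    haveI : Nontrivial (Matrix (Fin n) (Fin n) ℂ) := inferInstance
    -- z - c is in the spectrum of U - c • 1
    have hmem : z - c ∈ spectrum ℂ (U - c • (1 : Matrix (Fin n) (Fin n) ℂ)) := by
      have : z - c ∈ spectrum ℂ U - {c} := Set.sub_mem_sub hz rfl
      rwa [spectrum.sub_singleton_eq, Algebra.algebraMap_eq_smul_one] at this
    have hnorm : ‖z - c‖ ≤ ‖U - c • (1 : Matrix (Fin n) (Fin n) ℂ)‖ :=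
      spectrum.norm_le_norm_of_mem hmem
    -- compute ‖z - c‖
    have hzc : ‖z - c‖ = 2 * |Real.sin (f z / 2)| := by
      have hfac : z - c = c * (z * Complex.exp (-(φ:ℂ) * Complex.I) - 1) := by
        rw [mul_sub, mul_one, hc, ← mul_assoc, mul_comm (Complex.exp ((φ:ℂ) * Complex.I)) z,
          mul_assoc, ← Complex.exp_add]
        simp
      have hw : z * Complex.exp (-(φ:ℂ) * Complex.I) = Complex.exp ((f z : ℝ) * Complex.I) := by
        have habsw : ‖z * Complex.exp (-(φ:ℂ) * Complex.I)‖ = 1 := by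
          rw [norm_mul, hcircle z hz, one_mul]
          simpa using Complex.norm_exp_ofReal_mul_I (-φ)
        have := Complex.norm_mul_exp_arg_mul_I (z * Complex.exp (-(φ:ℂ) * Complex.I))
        rw [habsw, Complex.ofReal_one, one_mul] at this
        exact this.symm
      rw [hfac, norm_mul, habs_c, one_mul, hw, abs_exp_mul_I_sub_one']
    -- sin comparison
    have harg_le : |f z| ≤ Real.pi := Complex.abs_arg_le_pi _
    have hsin : Real.sin (α / 4) ≤ |Real.sin (f z / 2)| := by
      have h1 : |Real.sin (f z / 2)| = Real.sin (|f z| / 2) := by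
        rcases le_or_gt 0 (f z) with h | h
        · rw [abs_of_nonneg h, abs_of_nonneg]
          exact Real.sin_nonneg_of_nonneg_of_le_pi (by positivity) (by linarith [abs_of_nonneg h ▸ harg_le])
        · have hple : -Real.pi ≤ f z := (abs_le.mp harg_le).1
          rw [abs_of_neg h, neg_div, Real.sin_neg, abs_of_nonpos
            (Real.sin_nonpos_of_nonpos_of_neg_pi_le (by linarith) (by linarith))]
      rw [h1]
      apply Real.sin_le_sin_of_le_of_le_pi_div_two
      · linarith
      · linarith
      · linarith
    calc 2 * Real.sin (α / 4) ≤ 2 * |Real.sin (f z / 2)| := by linarith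
      _ = ‖z - c‖ := hzc.symm
      _ ≤ _ := hnorm
  · -- Case B: all eigenvalues close; contradiction with arc length unless spectrum empty/small α
    push_neg at hcase
    rcases Set.eq_empty_or_nonempty (spectrum ℂ U) with hemp | hne
    · -- spectrum empty: arcLength ≤ 0 so α = 0
      have h0 : (0:ℝ) ∈ { L : ℝ | 0 ≤ L ∧ ∃ θ : ℝ, ∀ z ∈ spectrum ℂ U, ∃ ψ : ℝ,
          θ ≤ ψ ∧ ψ ≤ θ + L ∧ z = Complex.exp (ψ * Complex.I) } :=
        ⟨le_refl 0, 0, fun z hz => absurd hz (by simp [hemp])⟩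
      have : arcLength U ≤ 0 := csInf_le hbdd h0
      have hα : α = 0 := le_antisymm (le_trans hαarc this) hα0
      rw [hα]
      have := norm_nonneg (U - Complex.exp (φ * Complex.I) • (1 : Matrix (Fin n) (Fin n) ℂ))
      simpa using this
    · -- spectrum nonempty and finite: build a shorter arc, contradiction
      exfalso
      have hfin : (spectrum ℂ U).Finite := U.finite_spectrum
      set F : Finset ℂ := hfin.toFinset with hF
      have hFne : F.Nonempty := by
        rwa [hF, Set.Finite.toFinset_nonempty]
      set D : ℝ := F.sup' hFne (fun z => |f z|) with hD
      have hD_lt : D < α / 2 := by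
        rw [hD, Finset.sup'_lt_iff]
        intro z hz
        exact hcase z (hfin.mem_toFinset.mp hz)
      have hD_nonneg : 0 ≤ D := by
        obtain ⟨z, hz⟩ := hFne
        exact le_trans (abs_nonneg (f z)) (Finset.le_sup' (fun z => |f z|) hz)
      have hmemL : (2 * D) ∈ { L : ℝ | 0 ≤ L ∧ ∃ θ : ℝ, ∀ z ∈ spectrum ℂ U, ∃ ψ : ℝ,
          θ ≤ ψ ∧ ψ ≤ θ + L ∧ z = Complex.exp (ψ * Complex.I) } := by
        refine ⟨by linarith, φ - D, fun z hz => ⟨φ + f z, ?_, ?_, hrep z hz⟩⟩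
        · have : |f z| ≤ D := Finset.le_sup' (fun z => |f z|) (hfin.mem_toFinset.mpr hz)
          have := (abs_le.mp this).1
          linarith
        · have : |f z| ≤ D := Finset.le_sup' (fun z => |f z|) (hfin.mem_toFinset.mpr hz)
          have := (abs_le.mp this).2
          linarith
      have : arcLength U ≤ 2 * D := csInf_le hbdd hmemL
      linarith
end
end

section
/- Let U₁, …, U_m and V₁, …, V_m be unitary matrices on the same finite-dimensional complex Hilbert space. Then |α(U_m ⋯ U₂ U₁) − α(V_m ⋯ V₂ V₁)| ≤ π · Σ_{i=1}^{m} ‖U_i − V_i‖; that is, the error in the phase range of a circuit is at most π times the sum of the operator-norm errors of its individual gates. -/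
open Matrix
open scoped Matrix.Norms.L2Operator Kronecker ComplexOrder

noncomputable section

/-- Matrices over `ℂ` with the `L2` operator norm form a C⋆-algebra. -/
noncomputable instance matrixCStarAlgebraAux {n : ℕ} : CStarAlgebra (Matrix (Fin n) (Fin n) ℂ) := Matrix.instCStarAlgebra

namespace PhaseRangeAux

open Real

variable {n : ℕ}

lemma isStarNormal_of_unitary {A : Matrix (Fin n) (Fin n) ℂ}
    (h : A ∈ unitary (Matrix (Fin n) (Fin n) ℂ)) : IsStarNormal A := by
  constructor
  rw [Commute, SemiconjBy, (Unitary.mem_iff.mp h).1, (Unitary.mem_iff.mp h).2]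

lemma norm_le_one_of_unitary {A : Matrix (Fin n) (Fin n) ℂ}
    (h : A ∈ unitary (Matrix (Fin n) (Fin n) ℂ)) : ‖A‖ ≤ 1 := by
  have h1 : ‖(1 : Matrix (Fin n) (Fin n) ℂ)‖ = ‖(1 : Matrix (Fin n) (Fin n) ℂ)‖ * ‖(1 : Matrix (Fin n) (Fin n) ℂ)‖ := by
    rw [← CStarRing.norm_star_mul_self (x := (1 : Matrix (Fin n) (Fin n) ℂ)), star_one, one_mul]
  have h2 : ‖A‖ * ‖A‖ = ‖(1 : Matrix (Fin n) (Fin n) ℂ)‖ := by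
    rw [← CStarRing.norm_star_mul_self (x := A), (Unitary.mem_iff.mp h).1]
  nlinarith [norm_nonneg A, norm_nonneg (1 : Matrix (Fin n) (Fin n) ℂ), sq_nonneg (‖A‖ - 1), sq_nonneg (‖A‖ + 1), sq_nonneg (‖A‖*‖A‖ - 1)]

/-- Hausdorff-type spectral perturbation for a unitary (normal) matrix `A`. -/
lemma spec_approx (A B : Matrix (Fin n) (Fin n) ℂ)
    (hA : A ∈ unitary (Matrix (Fin n) (Fin n) ℂ)) {lam : ℂ}
    (hlam : lam ∈ spectrum ℂ B) :
    ∃ mu ∈ spectrum ℂ A, ‖lam - mu‖ ≤ ‖A - B‖ := by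
  by_contra hcon
  push_neg at hcon
  haveI : IsStarNormal A := isStarNormal_of_unitary hA
  set ε := ‖A - B‖ with hε
  have hε0 : 0 ≤ ε := norm_nonneg _
  obtain ⟨d, hdε, hd⟩ : ∃ d : ℝ, ε < d ∧ ∀ z ∈ spectrum ℂ A, d ≤ ‖lam - z‖ := by
    rcases (spectrum ℂ A).eq_empty_or_nonempty with hemp | hne
    · refine ⟨ε + 1, by linarith, ?_⟩
      simp [hemp]
    · obtain ⟨z₀, hz₀, hmin⟩ := (spectrum.isCompact (𝕜 := ℂ) A).exists_isMinOn hne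
        (Continuous.continuousOn (by fun_prop : Continuous fun z : ℂ => ‖lam - z‖))
      exact ⟨‖lam - z₀‖, hcon z₀ hz₀, fun z hz => hmin hz⟩
  have hd0 : 0 < d := lt_of_le_of_lt hε0 hdε
  have hne0 : ∀ z ∈ spectrum ℂ A, lam - z ≠ 0 := by
    intro z hz h0
    have := hd z hz
    rw [h0, norm_zero] at this
    linarith
  set f : ℂ → ℂ := fun z => (lam - z)⁻¹ with hf
  have hfc : ContinuousOn f (spectrum ℂ A) := by
    apply ContinuousOn.inv₀
    · exact (continuous_const.sub continuous_id).continuousOn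
    · exact hne0
  have hgc : ContinuousOn (fun z : ℂ => lam - z) (spectrum ℂ A) :=
    (continuous_const.sub continuous_id).continuousOn
  set r : Matrix (Fin n) (Fin n) ℂ := cfc f A with hr
  have hrnorm : ‖r‖ ≤ d⁻¹ := by
    apply norm_cfc_le (by positivity)
    intro z hz
    rw [hf]
    simp only [norm_inv]
    exact inv_anti₀ hd0 (hd z hz)
  have hAe : algebraMap ℂ (Matrix (Fin n) (Fin n) ℂ) lam - A = cfc (fun z : ℂ => lam - z) A := by
    rw [cfc_sub _ _ A (by fun_prop) (by fun_prop), cfc_const lam A, cfc_id' ℂ A]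
  have hone : r * (algebraMap ℂ (Matrix (Fin n) (Fin n) ℂ) lam - A) = 1 := by
    rw [hAe, hr, ← cfc_mul f _ A hfc hgc]
    have : cfc (fun z : ℂ => f z * (lam - z)) A = cfc (fun _ : ℂ => (1:ℂ)) A := by
      apply cfc_congr
      intro z hz
      exact inv_mul_cancel₀ (hne0 z hz)
    rw [this, cfc_const (1:ℂ) A]
    exact _root_.map_one _
  have hone' : (algebraMap ℂ (Matrix (Fin n) (Fin n) ℂ) lam - A) * r = 1 := by
    rw [hAe, hr, ← cfc_mul _ f A hgc hfc]
    have : cfc (fun z : ℂ => (lam - z) * f z) A = cfc (fun _ : ℂ => (1:ℂ)) A := by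
      apply cfc_congr
      intro z hz
      exact mul_inv_cancel₀ (hne0 z hz)
    rw [this, cfc_const (1:ℂ) A]
    exact _root_.map_one _
  have hu1 : IsUnit (algebraMap ℂ (Matrix (Fin n) (Fin n) ℂ) lam - A) :=
    ⟨⟨_, r, hone', hone⟩, rfl⟩
  have hsmall : ‖-(r * (A - B))‖ < 1 := by
    rw [norm_neg]
    calc ‖r * (A - B)‖ ≤ ‖r‖ * ‖A - B‖ := norm_mul_le _ _
    _ ≤ d⁻¹ * ε := by
        apply mul_le_mul hrnorm le_rfl (norm_nonneg _) (by positivity)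
    _ < 1 := by
        rw [inv_mul_lt_iff₀ hd0, mul_one]
        exact hdε
  have hu2 : IsUnit (1 + r * (A - B)) := by
    have := (Units.oneSub _ hsmall).isUnit
    simpa [sub_neg_eq_add] using this
  have hfact : algebraMap ℂ (Matrix (Fin n) (Fin n) ℂ) lam - B =
      (algebraMap ℂ (Matrix (Fin n) (Fin n) ℂ) lam - A) * (1 + r * (A - B)) := by
    rw [mul_add, mul_one, ← mul_assoc, hone', one_mul]
    abel
  have : IsUnit (algebraMap ℂ (Matrix (Fin n) (Fin n) ℂ) lam - B) := by
    rw [hfact]; exact hu1.mul hu2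
  exact (spectrum.mem_iff.mp hlam) this

lemma chord (a b : ℝ) :
    ‖Complex.exp (a * Complex.I) - Complex.exp (b * Complex.I)‖
      = 2 * |Real.sin ((a - b) / 2)| := by
  have key : Complex.exp (a * Complex.I) - Complex.exp (b * Complex.I)
      = 2 * Complex.I * Complex.sin (((a - b) / 2 : ℝ)) * Complex.exp ((((a + b) / 2 : ℝ)) * Complex.I) := by
    rw [Complex.sin]
    have e1 : (a : ℂ) * Complex.I
        = (((a - b) / 2 : ℝ) : ℂ) * Complex.I + (((a + b) / 2 : ℝ) : ℂ) * Complex.I := by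
      push_cast; ring
    have e2 : (b : ℂ) * Complex.I
        = -((((a - b) / 2 : ℝ) : ℂ) * Complex.I) + (((a + b) / 2 : ℝ) : ℂ) * Complex.I := by
      push_cast; ring
    rw [show (-(((a - b) / 2 : ℝ) : ℂ)) * Complex.I = -((((a - b) / 2 : ℝ) : ℂ) * Complex.I) from by ring]
    rw [e1, e2, Complex.exp_add, Complex.exp_add]
    have hI : Complex.I * Complex.I = -1 := Complex.I_mul_I
    linear_combination (Complex.exp ((((a - b) / 2 : ℝ) : ℂ) * Complex.I)
        * Complex.exp ((((a + b) / 2 : ℝ) : ℂ) * Complex.I)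
      - Complex.exp ((((a + b) / 2 : ℝ) : ℂ) * Complex.I)
        * Complex.exp (-((((a - b) / 2 : ℝ) : ℂ) * Complex.I))) * hI
  rw [key, norm_mul, norm_mul, norm_mul, Complex.norm_exp_ofReal_mul_I, mul_one,
    Complex.norm_I, mul_one, ← Complex.ofReal_sin]
  norm_num [Complex.norm_real, Real.norm_eq_abs]
  rw [show ((a:ℂ) - (b:ℂ)) / 2 = (((a - b) / 2 : ℝ) : ℂ) by push_cast; ring,
    ← Complex.ofReal_sin, Complex.norm_real, Real.norm_eq_abs]

lemma angle_adjust {ψ φ₀ ε : ℝ}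
    (h : ‖Complex.exp ((φ₀ : ℂ) * Complex.I) - Complex.exp ((ψ : ℂ) * Complex.I)‖ ≤ ε) :
    ∃ φ : ℝ, |φ - ψ| ≤ π * ε / 2 ∧
      Complex.exp ((φ : ℂ) * Complex.I) = Complex.exp ((φ₀ : ℂ) * Complex.I) := by
  set k : ℤ := round ((φ₀ - ψ) / (2 * π)) with hk
  set δ : ℝ := φ₀ - ψ - 2 * π * k with hδ
  have hπ := Real.pi_pos
  have hexp : Complex.exp (((ψ + δ : ℝ) : ℂ) * Complex.I)
      = Complex.exp ((φ₀ : ℂ) * Complex.I) := by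
    have : ((ψ + δ : ℝ) : ℂ) * Complex.I
        = (φ₀ : ℂ) * Complex.I - (k : ℂ) * (2 * π * Complex.I) := by
      push_cast [hδ]; ring
    rw [this, Complex.exp_sub, Complex.exp_int_mul_two_pi_mul_I, div_one]
  refine ⟨ψ + δ, ?_, hexp⟩
  have hδπ : |δ| ≤ π := by
    have h1 : |(φ₀ - ψ) / (2 * π) - k| ≤ 1 / 2 := abs_sub_round _
    have h2π : (0:ℝ) < 2 * π := by positivity
    have hδeq : δ = ((φ₀ - ψ) / (2 * π) - k) * (2 * π) := by
      field_simp [hδ]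
      exact hδ
    calc |δ| = |(φ₀ - ψ) / (2 * π) - k| * (2 * π) := by
          rw [hδeq, abs_mul, abs_of_pos h2π]
      _ ≤ (1/2) * (2 * π) := mul_le_mul_of_nonneg_right h1 h2π.le
      _ = π := by ring
  have hsin : 2 * |Real.sin (δ / 2)| ≤ ε := by
    have hc := chord (ψ + δ) ψ
    rw [hexp] at hc
    have he : ψ + δ - ψ = δ := by ring
    rw [he] at hc
    calc 2 * |Real.sin (δ / 2)| = _ := hc.symm
      _ ≤ ε := h
  have hx0 : 0 ≤ |δ| / 2 := by positivity
  have hx1 : |δ| / 2 ≤ π / 2 := by linarith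
  have hms := Real.mul_le_sin hx0 hx1
  have hsabs : Real.sin (|δ| / 2) = |Real.sin (δ / 2)| := by
    rcases abs_cases δ with ⟨he, _⟩ | ⟨he, hneg⟩
    · rw [he, abs_of_nonneg]
      apply Real.sin_nonneg_of_nonneg_of_le_pi
      · positivity
      · linarith
    · rw [he]
      rw [abs_of_nonpos]
      · rw [neg_div, Real.sin_neg]
      · apply Real.sin_nonpos_of_nonpos_of_neg_pi_le <;> linarith
  have h' : |δ| / π ≤ ε / 2 := by
    rw [hsabs] at hms
    calc |δ| / π = 2 / π * (|δ| / 2) := by ring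
      _ ≤ |Real.sin (δ / 2)| := hms
      _ ≤ ε / 2 := by linarith
  have hfin : |δ| ≤ π * ε / 2 := by
    calc |δ| = (|δ| / π) * π := by field_simp
      _ ≤ (ε / 2) * π := mul_le_mul_of_nonneg_right h' hπ.le
      _ = π * ε / 2 := by ring
  simpa using hfin

/-- Eigenvalues of unitary matrices are on the unit circle. -/
lemma exp_arg_of_unitary {A : Matrix (Fin n) (Fin n) ℂ}
    (hA : A ∈ unitary (Matrix (Fin n) (Fin n) ℂ)) {z : ℂ} (hz : z ∈ spectrum ℂ A) :
    z = Complex.exp ((Complex.arg z : ℂ) * Complex.I) := by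
  have h1 : z ∈ Metric.sphere (0:ℂ) 1 := spectrum.subset_circle_of_unitary (𝕜 := ℂ) hA hz
  have h2 : ‖z‖ = 1 := by
    simpa using mem_sphere_zero_iff_norm.mp h1
  conv_lhs => rw [← Complex.norm_mul_exp_arg_mul_I z]
  rw [h2]
  simp

lemma two_pi_mem {A : Matrix (Fin n) (Fin n) ℂ}
    (hA : A ∈ unitary (Matrix (Fin n) (Fin n) ℂ)) :
    (2 * π) ∈ { L : ℝ | 0 ≤ L ∧ ∃ θ : ℝ, ∀ z ∈ spectrum ℂ A, ∃ φ : ℝ,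
      θ ≤ φ ∧ φ ≤ θ + L ∧ z = Complex.exp (φ * Complex.I) } := by
  have hπ := Real.pi_pos
  refine ⟨by positivity, -π, fun z hz => ⟨Complex.arg z, ?_, ?_, exp_arg_of_unitary hA hz⟩⟩
  · exact (Complex.neg_pi_lt_arg z).le
  · linarith [Complex.arg_le_pi z]

lemma arcSet_bddBelow (A : Matrix (Fin n) (Fin n) ℂ) :
    BddBelow { L : ℝ | 0 ≤ L ∧ ∃ θ : ℝ, ∀ z ∈ spectrum ℂ A, ∃ φ : ℝ,
      θ ≤ φ ∧ φ ≤ θ + L ∧ z = Complex.exp (φ * Complex.I) } :=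
  ⟨0, fun _ hx => hx.1⟩

/-- One-sided perturbation bound for the arc length. -/
lemma arcLength_le_of_close {A B : Matrix (Fin n) (Fin n) ℂ}
    (hA : A ∈ unitary (Matrix (Fin n) (Fin n) ℂ))
    (hB : B ∈ unitary (Matrix (Fin n) (Fin n) ℂ))
    {ε : ℝ} (hε0 : 0 ≤ ε)
    (hclose : ∀ z ∈ spectrum ℂ A, ∃ w ∈ spectrum ℂ B, ‖z - w‖ ≤ ε) :
    arcLength A ≤ arcLength B + π * ε := by
  have hπ := Real.pi_pos
  rw [arcLength, arcLength]
  have key : ∀ L ∈ { L : ℝ | 0 ≤ L ∧ ∃ θ : ℝ, ∀ z ∈ spectrum ℂ B, ∃ φ : ℝ,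
      θ ≤ φ ∧ φ ≤ θ + L ∧ z = Complex.exp (φ * Complex.I) },
      sInf { L : ℝ | 0 ≤ L ∧ ∃ θ : ℝ, ∀ z ∈ spectrum ℂ A, ∃ φ : ℝ,
        θ ≤ φ ∧ φ ≤ θ + L ∧ z = Complex.exp (φ * Complex.I) } ≤ L + π * ε := by
    rintro L ⟨hL0, θ, hθ⟩
    apply csInf_le (arcSet_bddBelow A)
    refine ⟨by positivity, θ - π * ε / 2, fun z hz => ?_⟩
    obtain ⟨w, hw, hzw⟩ := hclose z hz
    obtain ⟨ψ, hψ1, hψ2, hweq⟩ := hθ w hw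
    have hzeq := exp_arg_of_unitary hA hz
    have hcl : ‖Complex.exp ((Complex.arg z : ℂ) * Complex.I)
        - Complex.exp ((ψ : ℂ) * Complex.I)‖ ≤ ε := by
      rw [← hzeq, ← hweq]
      exact hzw
    obtain ⟨φ, hφ1, hφ2⟩ := angle_adjust hcl
    rw [abs_sub_le_iff] at hφ1
    refine ⟨φ, by linarith [hφ1.2], by linarith [hφ1.1], ?_⟩
    rw [hφ2, ← hzeq]
  have hBne : { L : ℝ | 0 ≤ L ∧ ∃ θ : ℝ, ∀ z ∈ spectrum ℂ B, ∃ φ : ℝ,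
      θ ≤ φ ∧ φ ≤ θ + L ∧ z = Complex.exp (φ * Complex.I) }.Nonempty :=
    ⟨2 * π, two_pi_mem hB⟩
  have hlb : sInf { L : ℝ | 0 ≤ L ∧ ∃ θ : ℝ, ∀ z ∈ spectrum ℂ A, ∃ φ : ℝ,
      θ ≤ φ ∧ φ ≤ θ + L ∧ z = Complex.exp (φ * Complex.I) } - π * ε ≤
      sInf { L : ℝ | 0 ≤ L ∧ ∃ θ : ℝ, ∀ z ∈ spectrum ℂ B, ∃ φ : ℝ,
      θ ≤ φ ∧ φ ≤ θ + L ∧ z = Complex.exp (φ * Complex.I) } :=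
    le_csInf hBne (fun L hL => by linarith [key L hL])
  linarith [hlb]

lemma prod_unitary {m : ℕ} (U : Fin m → Matrix (Fin n) (Fin n) ℂ)
    (hU : ∀ i, U i ∈ unitary (Matrix (Fin n) (Fin n) ℂ)) :
    (List.ofFn U).reverse.prod ∈ unitary (Matrix (Fin n) (Fin n) ℂ) := by
  apply Submonoid.list_prod_mem
  intro x hx
  rw [List.mem_reverse, List.mem_ofFn] at hx
  obtain ⟨i, rfl⟩ := hx
  exact hU i

lemma telescope : ∀ (m : ℕ) (U V : Fin m → Matrix (Fin n) (Fin n) ℂ),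
    (∀ i, U i ∈ unitary (Matrix (Fin n) (Fin n) ℂ)) →
    (∀ i, V i ∈ unitary (Matrix (Fin n) (Fin n) ℂ)) →
    ‖(List.ofFn U).reverse.prod - (List.ofFn V).reverse.prod‖ ≤ ∑ i, ‖U i - V i‖ := by
  intro m
  induction m with
  | zero => intro U V _ _; simp
  | succ m ih =>
    intro U V hU hV
    have hmain : (List.ofFn U).reverse.prod
        = (List.ofFn (U ∘ Fin.succ)).reverse.prod * U 0 := by
      rw [List.ofFn_succ, List.reverse_cons, List.prod_append, List.prod_singleton]
      rfl
    have hmain' : (List.ofFn V).reverse.prod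
        = (List.ofFn (V ∘ Fin.succ)).reverse.prod * V 0 := by
      rw [List.ofFn_succ, List.reverse_cons, List.prod_append, List.prod_singleton]
      rfl
    set A' := (List.ofFn (U ∘ Fin.succ)).reverse.prod with hA'
    set B' := (List.ofFn (V ∘ Fin.succ)).reverse.prod with hB'
    have hsplit : A' * U 0 - B' * V 0 = (A' - B') * U 0 + B' * (U 0 - V 0) := by
      rw [sub_mul, mul_sub]; abel
    have hB'u : B' ∈ unitary (Matrix (Fin n) (Fin n) ℂ) :=
      prod_unitary (V ∘ Fin.succ) (fun i => hV i.succ)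
    have hstep : ‖A' * U 0 - B' * V 0‖ ≤ ‖A' - B'‖ + ‖U 0 - V 0‖ := by
      rw [hsplit]
      calc ‖(A' - B') * U 0 + B' * (U 0 - V 0)‖
          ≤ ‖(A' - B') * U 0‖ + ‖B' * (U 0 - V 0)‖ := norm_add_le _ _
        _ ≤ ‖A' - B'‖ * ‖U 0‖ + ‖B'‖ * ‖U 0 - V 0‖ :=
            add_le_add (norm_mul_le _ _) (norm_mul_le _ _)
        _ ≤ ‖A' - B'‖ * 1 + 1 * ‖U 0 - V 0‖ := by
            apply add_le_add
            · exact mul_le_mul_of_nonneg_left (norm_le_one_of_unitary (hU 0)) (norm_nonneg _)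
            · exact mul_le_mul_of_nonneg_right (norm_le_one_of_unitary hB'u) (norm_nonneg _)
        _ = ‖A' - B'‖ + ‖U 0 - V 0‖ := by ring
    have hih := ih (U ∘ Fin.succ) (V ∘ Fin.succ) (fun i => hU i.succ) (fun i => hV i.succ)
    rw [hmain, hmain', Fin.sum_univ_succ]
    calc ‖A' * U 0 - B' * V 0‖ ≤ ‖A' - B'‖ + ‖U 0 - V 0‖ := hstep
      _ ≤ (∑ i, ‖(U ∘ Fin.succ) i - (V ∘ Fin.succ) i‖) + ‖U 0 - V 0‖ :=
          add_le_add hih le_rfl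
      _ = ‖U 0 - V 0‖ + ∑ i : Fin m, ‖U i.succ - V i.succ‖ := by
          simp [Function.comp]; ring
  -- done

lemma abs_min_sub_min (c a b : ℝ) : |min c a - min c b| ≤ |a - b| := by
  have key : ∀ x y : ℝ, min c x - min c y ≤ |x - y| := by
    intro x y
    have hx : x ≤ y + |x - y| := by linarith [le_abs_self (x - y)]
    have h2 : min c x ≤ min (c + |x - y|) (y + |x - y|) :=
      min_le_min (by linarith [abs_nonneg (x - y)]) hx
    rw [min_add_add_right] at h2
    linarith
  rw [abs_sub_le_iff]
  refine ⟨key a b, ?_⟩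
  have := key b a
  rwa [abs_sub_comm] at this

end PhaseRangeAux

/-- The error in the phase range of a circuit is at most `π` times the sum of the
operator-norm errors of its individual gates: for unitaries `U i`, `V i`,
`|α(U_m ⋯ U₁) - α(V_m ⋯ V₁)| ≤ π ∑ᵢ ‖U i - V i‖`. -/
theorem abs_phaseRange_prod_sub_le {n m : ℕ}
    (U V : Fin m → Matrix (Fin n) (Fin n) ℂ)
    (hU : ∀ i, U i ∈ Matrix.unitaryGroup (Fin n) ℂ)
    (hV : ∀ i, V i ∈ Matrix.unitaryGroup (Fin n) ℂ) :
    |phaseRange ((List.ofFn U).reverse.prod) - phaseRange ((List.ofFn V).reverse.prod)| ≤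
      Real.pi * ∑ i, ‖U i - V i‖ := by
  have hπ := Real.pi_pos
  set A := (List.ofFn U).reverse.prod with hA
  set B := (List.ofFn V).reverse.prod with hB
  have hAu : A ∈ unitary (Matrix (Fin n) (Fin n) ℂ) := PhaseRangeAux.prod_unitary U hU
  have hBu : B ∈ unitary (Matrix (Fin n) (Fin n) ℂ) := PhaseRangeAux.prod_unitary V hV
  set ε := ‖A - B‖ with hε
  have hε0 : 0 ≤ ε := norm_nonneg _
  have hεsum : ε ≤ ∑ i, ‖U i - V i‖ := PhaseRangeAux.telescope m U V hU hV
  have hcloseA : ∀ z ∈ spectrum ℂ A, ∃ w ∈ spectrum ℂ B, ‖z - w‖ ≤ ε := by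
    intro z hz
    obtain ⟨w, hw, h⟩ := PhaseRangeAux.spec_approx B A hBu hz
    exact ⟨w, hw, h.trans (by rw [norm_sub_rev])⟩
  have hcloseB : ∀ z ∈ spectrum ℂ B, ∃ w ∈ spectrum ℂ A, ‖z - w‖ ≤ ε := by
    intro z hz
    obtain ⟨w, hw, h⟩ := PhaseRangeAux.spec_approx A B hAu hz
    exact ⟨w, hw, h⟩
  have h1 : arcLength A ≤ arcLength B + Real.pi * ε :=
    PhaseRangeAux.arcLength_le_of_close hAu hBu hε0 hcloseA
  have h2 : arcLength B ≤ arcLength A + Real.pi * ε :=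
    PhaseRangeAux.arcLength_le_of_close hBu hAu hε0 hcloseB
  have harc : |arcLength A - arcLength B| ≤ Real.pi * ε := by
    rw [abs_sub_le_iff]
    constructor <;> linarith
  have hphase : |phaseRange A - phaseRange B| ≤ Real.pi * ε := by
    calc |phaseRange A - phaseRange B|
        = |min Real.pi (arcLength A) - min Real.pi (arcLength B)| := by rw [phaseRange, phaseRange]
      _ ≤ |arcLength A - arcLength B| := PhaseRangeAux.abs_min_sub_min _ _ _
      _ ≤ Real.pi * ε := harc
  calc |phaseRange A - phaseRange B| ≤ Real.pi * ε := hphase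
    _ ≤ Real.pi * ∑ i, ‖U i - V i‖ := mul_le_mul_of_nonneg_left hεsum hπ.le
end
end
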